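/- arXiv:0803.4329 — 6 statements merged into one kernel-verified Lean document; each statement's English description precedes it below -/
import Mathlib

section
/- With α = α_{(z,χ)} : ℤ ⋉ H → GL(n,ℂ) as above, for every (j,h) ∈ ℤ ⋉ H we have det(α(j,h)) = (−1)^{(n+1)j} · z^j · ∏_{i=0}^{n−1} χ(t^i·h). In particular, if multiplication by t−1 is surjective on H and χ kills (t^n−1)·H, then det(α(j,h)) = (−1)^{(n+1)j}·z^j. -/
open Matrix

/-- det(α_{(z,χ)}(j,h)) = (−1)^{(n+1)j}·zʲ·∏_{i=0}^{n−1} χ(tⁱ·h); in particular,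
if multiplication by t−1 is surjective on H and χ kills (tⁿ−1)·H, then
det(α(j,h)) = (−1)^{(n+1)j}·zʲ. -/
theorem stmt_9 (n : ℕ) (hn : 0 < n)
    (H : Type*) [AddCommGroup H] (t : AddAut H)
    (χ : H → ℂˣ) (hχ : ∀ a b : H, χ (a + b) = χ a * χ b)
    (z : ℂˣ)
    (U : GL (Fin n) ℂ)
    (hU : (U : Matrix (Fin n) (Fin n) ℂ) = Matrix.of fun i j : Fin n =>
      if (i : ℕ) = (j : ℕ) + 1 then 1
      else if (i : ℕ) = 0 ∧ (j : ℕ) = n - 1 then (z : ℂ)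
      else 0)
    (D : H → GL (Fin n) ℂ)
    (hD : ∀ h : H, (D h : Matrix (Fin n) (Fin n) ℂ)
      = Matrix.diagonal fun i : Fin n => (χ (((i : ℕ) • t) h) : ℂ)) :
    (∀ (j : ℤ) (h : H),
      ((U ^ j * D h : GL (Fin n) ℂ) : Matrix (Fin n) (Fin n) ℂ).det
        = (-1 : ℂ) ^ (((n : ℤ) + 1) * j) * (z : ℂ) ^ j
            * ∏ i ∈ Finset.range n, (χ ((i • t) h) : ℂ)) ∧
    ((Function.Surjective fun h : H => t h - h) →
      (∀ h : H, χ ((n • t) h) = χ h) →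
      ∀ (j : ℤ) (h : H),
        ((U ^ j * D h : GL (Fin n) ℂ) : Matrix (Fin n) (Fin n) ℂ).det
          = (-1 : ℂ) ^ (((n : ℤ) + 1) * j) * (z : ℂ) ^ j) := by
  obtain ⟨m, rfl⟩ : ∃ m, n = m + 1 := ⟨n - 1, (Nat.succ_pred_eq_of_pos hn).symm⟩
  -- the permutation and diagonal decomposition of U
  set σ : Equiv.Perm (Fin (m + 1)) := (finRotate (m + 1))⁻¹ with hσ
  set c : Fin (m + 1) → ℂ := fun j => if (j : ℕ) = m then (z : ℂ) else 1 with hc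
  have hUeq : (U : Matrix (Fin (m + 1)) (Fin (m + 1)) ℂ)
      = σ.permMatrix ℂ * Matrix.diagonal c := by
    rw [hU]
    ext i j
    rw [Matrix.mul_diagonal]
    have hperm : σ.permMatrix ℂ i j = if σ i = j then 1 else 0 := by
      simp [Equiv.Perm.permMatrix, PEquiv.toMatrix, Equiv.toPEquiv, Option.mem_def, eq_comm]
    have hval : ((j + 1 : Fin (m + 1)) : ℕ) = if (j : ℕ) = m then 0 else (j : ℕ) + 1 := by
      rw [Fin.val_add_one]
      by_cases hj : j = Fin.last m
      · rw [if_pos hj, if_pos (by simp [hj, Fin.val_last])]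
      · rw [if_neg hj, if_neg (fun hjv => hj (Fin.ext (by simp [hjv, Fin.val_last])))]
    have hsig : σ i = j ↔ ((j : ℕ) = m ∧ (i : ℕ) = 0) ∨ ((j : ℕ) ≠ m ∧ (i : ℕ) = (j : ℕ) + 1) := by
      rw [hσ, Equiv.Perm.inv_eq_iff_eq, finRotate_succ_apply, Fin.ext_iff, hval]
      by_cases hj : (j : ℕ) = m
      · simp [hj]
      · simp [hj]
    rw [hperm]
    simp only [Matrix.of_apply, hsig, hc]
    have hiLt := i.isLt
    have hjLt := j.isLt
    split_ifs <;> first | (exfalso; omega) | ring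
  have hdetU : (U : Matrix (Fin (m + 1)) (Fin (m + 1)) ℂ).det = (-1 : ℂ) ^ m * (z : ℂ) := by
    rw [hUeq, Matrix.det_mul, Matrix.det_permutation, Matrix.det_diagonal]
    have hsign : Equiv.Perm.sign σ = (-1 : ℤˣ) ^ m := by
      rw [hσ, Equiv.Perm.sign_inv, sign_finRotate, Nat.add_sub_cancel]
    have hprod : ∏ j : Fin (m + 1), c j = (z : ℂ) := by
      rw [Finset.prod_eq_single (Fin.last m)]
      · simp [hc, Fin.val_last]
      · intro b _ hb
        have : (b : ℕ) ≠ m := fun h => hb (Fin.ext (by simp [h, Fin.val_last]))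
        simp [hc, this]
      · simp
    rw [hsign, hprod]
    push_cast
    ring
  -- determinant as a group hom
  set d : GL (Fin (m + 1)) ℂ →* ℂˣ := Units.map Matrix.detMonoidHom with hd
  have hdcoe : ∀ M : GL (Fin (m + 1)) ℂ,
      ((d M : ℂˣ) : ℂ) = ((M : Matrix (Fin (m + 1)) (Fin (m + 1)) ℂ)).det := fun M => rfl
  have key : ∀ (j : ℤ) (h : H),
      ((U ^ j * D h : GL (Fin (m + 1)) ℂ) : Matrix (Fin (m + 1)) (Fin (m + 1)) ℂ).det
        = (-1 : ℂ) ^ ((((m + 1 : ℕ) : ℤ) + 1) * j) * (z : ℂ) ^ j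
            * ∏ i ∈ Finset.range (m + 1), (χ ((i • t) h) : ℂ) := by
    intro j h
    have h1 : ((U ^ j * D h : GL (Fin (m + 1)) ℂ) : Matrix (Fin (m + 1)) (Fin (m + 1)) ℂ).det
        = ((d U : ℂ) ^ j) * (d (D h) : ℂ) := by
      rw [← hdcoe, _root_.map_mul, map_zpow, Units.val_mul, Units.val_zpow_eq_zpow_val]
    rw [h1, hdcoe, hdcoe, hdetU, hD, Matrix.det_diagonal,
      Fin.prod_univ_eq_prod_range (fun k : ℕ => ((χ ((k • t) h)) : ℂ)) (m + 1)]
    have h2 : ((-1 : ℂ) ^ m * (z : ℂ)) ^ j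
        = (-1 : ℂ) ^ ((((m + 1 : ℕ) : ℤ) + 1) * j) * (z : ℂ) ^ j := by
      rw [mul_zpow]
      congr 1
      have : (-1 : ℂ) ^ m = (-1 : ℂ) ^ (m : ℤ) := by rw [zpow_natCast]
      rw [this, ← _root_.zpow_mul]
      have hexp : ((((m + 1 : ℕ) : ℤ) + 1) * j) = (m : ℤ) * j + 2 * j := by push_cast; ring
      rw [hexp, zpow_add₀ (by norm_num : (-1 : ℂ) ≠ 0)]
      have : (-1 : ℂ) ^ (2 * j) = 1 := by
        rw [_root_.zpow_mul]; norm_num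
      rw [this, mul_one]
    rw [h2]
  refine ⟨key, ?_⟩
  intro hsurj hper j h
  -- χ basics
  have hχ0 : χ 0 = 1 := by
    have h0 := hχ 0 0
    rw [add_zero] at h0
    exact (mul_left_cancel (show χ 0 * 1 = χ 0 * χ 0 by rw [mul_one, ← h0])).symm
  have hχsub : ∀ a b : H, χ (a - b) = χ a * (χ b)⁻¹ := by
    intro a b
    have := hχ (a - b) b
    rw [sub_add_cancel] at this
    rw [this, mul_assoc]
    group
  obtain ⟨g, hg⟩ := hsurj h
  have hprod1 : ∏ i ∈ Finset.range (m + 1), (χ ((i • t) h) : ℂ) = 1 := by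
    have hu : (∏ i ∈ Finset.range (m + 1), χ ((i • t) h)) = 1 := by
      have hterm : ∀ i : ℕ, χ ((i • t) h) = χ (((i + 1) • t) g) / χ ((i • t) g) := by
        intro i
        have : (i • t) h = ((i + 1) • t) g - (i • t) g := by
          rw [← hg, succ_nsmul, AddAut.add_apply]
          exact map_sub (i • t : AddAut H) (t g) g
        rw [this, hχsub, div_eq_mul_inv]
      calc (∏ i ∈ Finset.range (m + 1), χ ((i • t) h))
          = ∏ i ∈ Finset.range (m + 1), χ (((i + 1) • t) g) / χ ((i • t) g) := by
            exact Finset.prod_congr rfl fun i _ => hterm i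
        _ = χ (((m + 1) • t) g) / χ ((0 • t) g) := Finset.prod_range_div (fun i => χ ((i • t) g)) (m + 1)
        _ = 1 := by rw [hper g, zero_nsmul]; simp
    calc ∏ i ∈ Finset.range (m + 1), (χ ((i • t) h) : ℂ)
        = ((∏ i ∈ Finset.range (m + 1), χ ((i • t) h) : ℂˣ) : ℂ) :=
          (map_prod (Units.coeHom ℂ) _ _).symm
      _ = 1 := by rw [hu, Units.val_one]
  rw [key j h, hprod1, mul_one]
end

section
/- Let α : ℤ ⋉ H → GL(n,ℂ) be the representation α_{(z,χ)} where χ : H → ℂ* satisfies χ(t^n·h)=χ(h). If there exists 0 < ℓ < n with ℓ | n and χ(t^ℓ·h) = χ(h) for all h, then α is reducible, i.e., there is a nonzero proper subspace of ℂ^n invariant under all α(j,h). -/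
open Matrix

private lemma gl_inv_pres {n : ℕ} (M : GL (Fin n) ℂ) (V : Submodule ℂ (Fin n → ℂ))
    (hM : ∀ v ∈ V, (M : Matrix (Fin n) (Fin n) ℂ).mulVec v ∈ V) :
    ∀ v ∈ V, ((M⁻¹ : GL (Fin n) ℂ) : Matrix (Fin n) (Fin n) ℂ).mulVec v ∈ V := by
  intro v hv
  have hMM : ((M : Matrix (Fin n) (Fin n) ℂ))⁻¹ * (M : Matrix (Fin n) (Fin n) ℂ) = 1 :=
    Matrix.nonsing_inv_mul _ ((Matrix.isUnit_iff_isUnit_det _).mp M.isUnit)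
  have hinj : Function.Injective ((M : Matrix (Fin n) (Fin n) ℂ)).mulVecLin := by
    intro a b hab
    have h2 := congrArg ((M⁻¹ : GL (Fin n) ℂ) : Matrix (Fin n) (Fin n) ℂ).mulVec hab
    simpa [Matrix.mulVecLin_apply, Matrix.mulVec_mulVec, hMM] using h2
  have hmap : V.map ((M : Matrix (Fin n) (Fin n) ℂ)).mulVecLin = V := by
    apply Submodule.eq_of_le_of_finrank_le
    · rintro x ⟨w, hw, rfl⟩
      exact hM w hw
    · exact le_of_eq (LinearEquiv.finrank_eq
        (Submodule.equivMapOfInjective _ hinj V))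
  rw [← hmap] at hv
  obtain ⟨w, hw, rfl⟩ := hv
  simpa [Matrix.mulVecLin_apply, Matrix.mulVec_mulVec, hMM] using hw

private lemma gl_zpow_pres {n : ℕ} (M : GL (Fin n) ℂ) (V : Submodule ℂ (Fin n → ℂ))
    (hM : ∀ v ∈ V, (M : Matrix (Fin n) (Fin n) ℂ).mulVec v ∈ V) (j : ℤ) :
    ∀ v ∈ V, ((M ^ j : GL (Fin n) ℂ) : Matrix (Fin n) (Fin n) ℂ).mulVec v ∈ V := by
  have hnat : ∀ (N : GL (Fin n) ℂ), (∀ v ∈ V, (N : Matrix (Fin n) (Fin n) ℂ).mulVec v ∈ V) →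
      ∀ (k : ℕ) (v : Fin n → ℂ), v ∈ V →
      ((N ^ k : GL (Fin n) ℂ) : Matrix (Fin n) (Fin n) ℂ).mulVec v ∈ V := by
    intro N hN k
    induction k with
    | zero => intro v hv; simpa using hv
    | succ m ih =>
      intro v hv
      have : ((N ^ (m + 1) : GL (Fin n) ℂ) : Matrix (Fin n) (Fin n) ℂ).mulVec v
          = ((N ^ m : GL (Fin n) ℂ) : Matrix (Fin n) (Fin n) ℂ).mulVec
            ((N : Matrix (Fin n) (Fin n) ℂ).mulVec v) := by
        rw [Matrix.mulVec_mulVec]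
        norm_cast
      rw [this]
      exact ih _ (hN v hv)
  intro v hv
  cases j with
  | ofNat k => simpa using hnat M hM k v hv
  | negSucc k =>
    rw [zpow_negSucc]
    exact gl_inv_pres (M ^ (k + 1)) V (fun w hw => hnat M hM (k + 1) w hw) v hv

/-- the subspace of vectors satisfying `v (i+ℓ) = v i * c ^ ℓ`. -/
private noncomputable def Vsub (n ℓ : ℕ) (c : ℂ) : Submodule ℂ (Fin n → ℂ) where
  carrier := {v | ∀ (i : ℕ) (h1 : i + ℓ < n) (h2 : i < n),
    v ⟨i + ℓ, h1⟩ = v ⟨i, h2⟩ * c ^ ℓ}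
  add_mem' := by
    intro a b ha hb i h1 h2
    simp only [Pi.add_apply, ha i h1 h2, hb i h1 h2]
    ring
  zero_mem' := by intro i h1 h2; simp
  smul_mem' := by
    intro r v hv i h1 h2
    simp only [Pi.smul_apply, smul_eq_mul, hv i h1 h2]
    ring

private lemma mem_Vsub {n ℓ : ℕ} {c : ℂ} {v : Fin n → ℂ} :
    v ∈ Vsub n ℓ c ↔ ∀ (i : ℕ) (h1 : i + ℓ < n) (h2 : i < n),
      v ⟨i + ℓ, h1⟩ = v ⟨i, h2⟩ * c ^ ℓ := Iff.rfl

/-- If χ is invariant under tˡ for some proper divisor ℓ of n, then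
α_{(z,χ)} is reducible: some nonzero proper subspace of ℂⁿ is invariant
under all α(j,h). -/
theorem stmt_10 (n : ℕ) (hn : 0 < n)
    (H : Type*) [AddCommGroup H] (t : AddAut H)
    (χ : H → ℂˣ) (hχ : ∀ a b : H, χ (a + b) = χ a * χ b)
    (hper : ∀ h : H, χ ((n • t) h) = χ h)
    (z : ℂˣ)
    (U : GL (Fin n) ℂ)
    (hU : (U : Matrix (Fin n) (Fin n) ℂ) = Matrix.of fun i j : Fin n =>
      if (i : ℕ) = (j : ℕ) + 1 then 1
      else if (i : ℕ) = 0 ∧ (j : ℕ) = n - 1 then (z : ℂ)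
      else 0)
    (D : H → GL (Fin n) ℂ)
    (hD : ∀ h : H, (D h : Matrix (Fin n) (Fin n) ℂ)
      = Matrix.diagonal fun i : Fin n => (χ (((i : ℕ) • t) h) : ℂ))
    (ℓ : ℕ) (hℓ0 : 0 < ℓ) (hℓn : ℓ < n) (hdvd : ℓ ∣ n)
    (hperℓ : ∀ h : H, χ ((ℓ • t) h) = χ h) :
    ∃ V : Submodule ℂ (Fin n → ℂ), V ≠ ⊥ ∧ V ≠ ⊤ ∧
      ∀ (j : ℤ) (h : H), ∀ v ∈ V,
        ((U ^ j * D h : GL (Fin n) ℂ) : Matrix (Fin n) (Fin n) ℂ).mulVec v ∈ V := by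
  obtain ⟨c, hc⟩ := IsAlgClosed.exists_pow_nat_eq ((z⁻¹ : ℂˣ) : ℂ) hn
  have hc0 : c ≠ 0 := by
    intro h
    rw [h, zero_pow hn.ne'] at hc
    exact (Units.ne_zero z⁻¹) hc.symm
  have hcz : (z : ℂ) * c ^ n = 1 := by
    rw [hc, Units.val_inv_eq_inv_val, mul_inv_cancel₀ z.ne_zero]
  have findx : ∀ (w : Fin n → ℂ) (a b : ℕ) (ha : a < n) (hb : b < n), a = b →
      w ⟨a, ha⟩ = w ⟨b, hb⟩ := by
    intro w a b ha hb hab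
    subst hab
    rfl
  -- iterated constraint
  have hiter : ∀ v ∈ Vsub n ℓ c, ∀ (a m : ℕ) (h1 : a + m * ℓ < n) (h2 : a < n),
      v ⟨a + m * ℓ, h1⟩ = v ⟨a, h2⟩ * c ^ (m * ℓ) := by
    intro v hv a m
    rw [mem_Vsub] at hv
    induction m with
    | zero =>
      intro h1 h2
      rw [findx v _ _ h1 h2 (by omega)]
      simp
    | succ m ih =>
      intro h1 h2
      have he : (m + 1) * ℓ = m * ℓ + ℓ := by ring
      have hm : a + m * ℓ + ℓ < n := by omega
      calc v ⟨a + (m + 1) * ℓ, h1⟩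
          = v ⟨a + m * ℓ + ℓ, hm⟩ := findx v _ _ _ _ (by omega)
        _ = v ⟨a + m * ℓ, by omega⟩ * c ^ ℓ := hv (a + m * ℓ) hm (by omega)
        _ = v ⟨a, h2⟩ * c ^ (m * ℓ) * c ^ ℓ := by rw [ih (by omega) h2]
        _ = v ⟨a, h2⟩ * c ^ ((m + 1) * ℓ) := by
            rw [mul_assoc, ← pow_add, he]
  -- pointwise formula for U
  have hUapp : ∀ (w : Fin n → ℂ) (i : Fin n), ((U : Matrix (Fin n) (Fin n) ℂ).mulVec w) i =
      if (i : ℕ) = 0 then (z : ℂ) * w ⟨n - 1, by omega⟩ else w ⟨(i : ℕ) - 1, by omega⟩ := by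
    intro w i
    rw [hU]
    have hsum : ((Matrix.of fun i j : Fin n =>
        if (i : ℕ) = (j : ℕ) + 1 then (1 : ℂ)
        else if (i : ℕ) = 0 ∧ (j : ℕ) = n - 1 then (z : ℂ) else 0).mulVec w) i
        = ∑ j : Fin n, (if (i : ℕ) = (j : ℕ) + 1 then (1 : ℂ)
        else if (i : ℕ) = 0 ∧ (j : ℕ) = n - 1 then (z : ℂ) else 0) * w j := by
      simp [Matrix.mulVec, dotProduct]
    rw [hsum]
    by_cases h0 : (i : ℕ) = 0
    · rw [if_pos h0, Fintype.sum_eq_single (⟨n - 1, by omega⟩ : Fin n) ?_]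
      · rw [if_neg (show ¬((i : ℕ) = ((⟨n - 1, by omega⟩ : Fin n) : ℕ) + 1) from by
            show ¬((i : ℕ) = (n - 1) + 1); omega),
          if_pos ⟨h0, rfl⟩]
      · intro b hb
        have hbv : (b : ℕ) ≠ n - 1 := by
          intro hh
          exact hb (Fin.ext (by rw [hh]))
        have hne1 : ¬((i : ℕ) = (b : ℕ) + 1) := by omega
        have hne2 : ¬((i : ℕ) = 0 ∧ (b : ℕ) = n - 1) := by tauto
        rw [if_neg hne1, if_neg hne2, zero_mul]
    · rw [if_neg h0, Fintype.sum_eq_single (⟨(i : ℕ) - 1, by omega⟩ : Fin n) ?_]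
      · rw [if_pos (show (i : ℕ) = ((⟨(i : ℕ) - 1, by omega⟩ : Fin n) : ℕ) + 1 from by
            show (i : ℕ) = (i : ℕ) - 1 + 1; omega), one_mul]
      · intro b hb
        have hbv : (b : ℕ) ≠ (i : ℕ) - 1 := by
          intro hh
          exact hb (Fin.ext (by rw [hh]))
        have hne1 : ¬((i : ℕ) = (b : ℕ) + 1) := by omega
        have hne2 : ¬((i : ℕ) = 0 ∧ (b : ℕ) = n - 1) := by tauto
        rw [if_neg hne1, if_neg hne2, zero_mul]
  -- U preserves V
  have hUU : ∀ v ∈ Vsub n ℓ c, (U : Matrix (Fin n) (Fin n) ℂ).mulVec v ∈ Vsub n ℓ c := by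
    intro v hv
    rw [mem_Vsub] at hv ⊢
    intro i h1 h2
    rw [hUapp v ⟨i + ℓ, h1⟩, hUapp v ⟨i, h2⟩]
    rw [if_neg (show ¬(((⟨i + ℓ, h1⟩ : Fin n) : ℕ) = 0) from by show ¬(i + ℓ = 0); omega)]
    by_cases hi0 : i = 0
    · rw [if_pos (show ((⟨i, h2⟩ : Fin n) : ℕ) = 0 from hi0)]
      obtain ⟨q, hq⟩ := hdvd
      have hq2 : 2 ≤ q := by
        by_contra hq2
        push_neg at hq2
        interval_cases q <;> omega
      have hM : n = ℓ + (q - 1) * ℓ := by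
        have h3 : q = (q - 1) + 1 := by omega
        rw [hq]
        nth_rewrite 1 [h3]
        ring
      have hidx : (ℓ - 1) + (q - 1) * ℓ < n := by omega
      have hit := hiter v hv (ℓ - 1) (q - 1) hidx (by omega)
      have e1 : v ⟨n - 1, by omega⟩ = v ⟨ℓ - 1, by omega⟩ * c ^ ((q - 1) * ℓ) := by
        rw [← hit]
        exact findx v _ _ _ _ (by omega)
      have e2 : v ⟨((⟨i + ℓ, h1⟩ : Fin n) : ℕ) - 1, by omega⟩ = v ⟨ℓ - 1, by omega⟩ :=
        findx v _ _ _ _ (by show i + ℓ - 1 = ℓ - 1; omega)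
      rw [e1, e2]
      have e3 : (z : ℂ) * (v ⟨ℓ - 1, by omega⟩ * c ^ ((q - 1) * ℓ)) * c ^ ℓ
          = v ⟨ℓ - 1, by omega⟩ * ((z : ℂ) * c ^ ((q - 1) * ℓ + ℓ)) := by
        rw [pow_add]
        ring
      rw [e3, show (q - 1) * ℓ + ℓ = n from by omega, hcz, mul_one]
    · rw [if_neg (show ¬(((⟨i, h2⟩ : Fin n) : ℕ) = 0) from hi0)]
      calc v ⟨((⟨i + ℓ, h1⟩ : Fin n) : ℕ) - 1, by omega⟩
          = v ⟨(i - 1) + ℓ, by omega⟩ := findx v _ _ _ _ (by show i + ℓ - 1 = i - 1 + ℓ; omega)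
        _ = v ⟨i - 1, by omega⟩ * c ^ ℓ := hv (i - 1) (by omega) (by omega)
        _ = v ⟨((⟨i, h2⟩ : Fin n) : ℕ) - 1, by omega⟩ * c ^ ℓ := by
            rw [findx v (i - 1) _ _ (by omega) rfl]
  -- D h preserves V
  have hDD : ∀ (h : H), ∀ v ∈ Vsub n ℓ c,
      ((D h : GL (Fin n) ℂ) : Matrix (Fin n) (Fin n) ℂ).mulVec v ∈ Vsub n ℓ c := by
    intro h v hv
    rw [mem_Vsub] at hv ⊢
    intro i h1 h2
    rw [hD h, Matrix.mulVec_diagonal, Matrix.mulVec_diagonal]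
    have hchi : χ (((i + ℓ) • t) h) = χ ((i • t) h) := by
      have he : ((i + ℓ) • t) h = (ℓ • t) ((i • t) h) := by
        rw [add_comm, add_nsmul]
        rfl
      rw [he, hperℓ]
    show (χ (((i + ℓ) • t) h) : ℂ) * v ⟨i + ℓ, h1⟩ = (χ ((i • t) h) : ℂ) * v ⟨i, h2⟩ * c ^ ℓ
    rw [hchi, hv i h1 h2]
    ring
  refine ⟨Vsub n ℓ c, ?_, ?_, ?_⟩
  · intro hbot
    have hwV : (fun i : Fin n => c ^ (i : ℕ)) ∈ Vsub n ℓ c := by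
      rw [mem_Vsub]
      intro i h1 h2
      show c ^ (i + ℓ) = c ^ i * c ^ ℓ
      rw [pow_add]
    rw [hbot, Submodule.mem_bot] at hwV
    have h1 := congrFun hwV ⟨0, hn⟩
    simp at h1
  · intro htop
    have he : (fun j : Fin n => if (j : ℕ) = 0 then (1 : ℂ) else 0) ∈ Vsub n ℓ c :=
      htop ▸ Submodule.mem_top
    rw [mem_Vsub] at he
    have h1 := he 0 (by omega) (by omega)
    rw [if_neg (show ¬(((⟨0 + ℓ, by omega⟩ : Fin n) : ℕ) = 0) from by
        show ¬(0 + ℓ = 0); omega),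
      if_pos (show ((⟨0, by omega⟩ : Fin n) : ℕ) = 0 from rfl), one_mul] at h1
    exact pow_ne_zero ℓ hc0 h1.symm
  · intro j h v hv
    rw [Units.val_mul, ← Matrix.mulVec_mulVec]
    exact gl_zpow_pres U _ hUU j _ (hDD h v hv)
end

section
/- Let α = α_{(z,χ)} : ℤ ⋉ H → GL(n,ℂ) where χ : H → ℂ* is a character such that the characters χ, t·χ, …, t^{n−1}·χ are pairwise distinct (here (t^i·χ)(h) := χ(t^i·h)). Then α is irreducible: the only subspaces of ℂ^n invariant under the image of α are 0 and ℂ^n. -/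
open Matrix
open Fin.NatCast

/-- If the characters χ, t·χ, …, t^{n−1}·χ are pairwise distinct, then
α_{(z,χ)} is irreducible: the only invariant subspaces of ℂⁿ are 0 and ℂⁿ. -/
theorem stmt_11 (n : ℕ) (hn : 0 < n)
    (H : Type*) [AddCommGroup H] (t : AddAut H)
    (χ : H → ℂˣ) (hχ : ∀ a b : H, χ (a + b) = χ a * χ b)
    (hper : ∀ h : H, χ ((n • t) h) = χ h)
    (hdist : ∀ i j : ℕ, i < n → j < n → i ≠ j → ∃ h : H, χ ((i • t) h) ≠ χ ((j • t) h))
    (z : ℂˣ)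
    (U : GL (Fin n) ℂ)
    (hU : (U : Matrix (Fin n) (Fin n) ℂ) = Matrix.of fun i j : Fin n =>
      if (i : ℕ) = (j : ℕ) + 1 then 1
      else if (i : ℕ) = 0 ∧ (j : ℕ) = n - 1 then (z : ℂ)
      else 0)
    (D : H → GL (Fin n) ℂ)
    (hD : ∀ h : H, (D h : Matrix (Fin n) (Fin n) ℂ)
      = Matrix.diagonal fun i : Fin n => (χ (((i : ℕ) • t) h) : ℂ)) :
    ∀ V : Submodule ℂ (Fin n → ℂ),
      (∀ (j : ℤ) (h : H), ∀ v ∈ V,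
        ((U ^ j * D h : GL (Fin n) ℂ) : Matrix (Fin n) (Fin n) ℂ).mulVec v ∈ V) →
      V = ⊥ ∨ V = ⊤ := by
  haveI : NeZero n := ⟨hn.ne'⟩
  intro V hV
  -- χ 0 = 1
  have hχ0 : χ 0 = 1 := by
    have h1 : χ (0 + 0) = χ 0 * χ 0 := hχ 0 0
    rw [add_zero] at h1
    exact (left_eq_mul.mp h1)
  have hD0 : (D 0 : Matrix (Fin n) (Fin n) ℂ) = 1 := by
    rw [hD]
    have : (fun i : Fin n => (χ (((i : ℕ) • t) 0) : ℂ)) = fun _ => 1 := by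
      funext i; rw [map_zero, hχ0, Units.val_one]
    rw [this, Matrix.diagonal_one]
  -- invariance under D h
  have hDV : ∀ (h : H), ∀ v ∈ V, ((D h : Matrix (Fin n) (Fin n) ℂ)).mulVec v ∈ V := by
    intro h v hv
    have := hV 0 h v hv
    simpa using this
  -- invariance under U
  have hUV : ∀ v ∈ V, ((U : Matrix (Fin n) (Fin n) ℂ)).mulVec v ∈ V := by
    intro v hv
    have := hV 1 0 v hv
    simpa [hD0] using this
  -- key lemma: kill coordinates in s while keeping coordinate i up to nonzero scalar
  have key : ∀ (i : Fin n) (s : Finset (Fin n)), i ∉ s → ∀ v ∈ V,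
      ∃ w ∈ V, (∀ j ∈ s, w j = 0) ∧ ∃ c : ℂ, c ≠ 0 ∧ w i = c * v i := by
    intro i s
    induction s using Finset.induction_on with
    | empty =>
      intro _ v hv
      exact ⟨v, hv, by simp, 1, one_ne_zero, (one_mul _).symm⟩
    | @insert j s hj ih =>
      intro his v hv
      have hij : i ≠ j := fun e => his (e ▸ Finset.mem_insert_self j s)
      have his' : i ∉ s := fun e => his (Finset.mem_insert_of_mem e)
      obtain ⟨w, hwV, hws, c, hc, hwi⟩ := ih his' v hv
      obtain ⟨h, hne⟩ := hdist (i : ℕ) (j : ℕ) i.isLt j.isLt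
        (fun e => hij (Fin.ext e))
      have hneℂ : (χ (((i : ℕ) • t) h) : ℂ) ≠ (χ (((j : ℕ) • t) h) : ℂ) :=
        fun e => hne (Units.ext e)
      set w' : Fin n → ℂ :=
        ((D h : Matrix (Fin n) (Fin n) ℂ)).mulVec w
          - (χ (((j : ℕ) • t) h) : ℂ) • w with hw'
      have hw'app : ∀ k : Fin n,
          w' k = ((χ (((k : ℕ) • t) h) : ℂ) - (χ (((j : ℕ) • t) h) : ℂ)) * w k := by
        intro k
        simp only [hw', Pi.sub_apply, Pi.smul_apply, smul_eq_mul, hD,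
          Matrix.mulVec_diagonal]
        ring
      refine ⟨w', V.sub_mem (hDV h w hwV) (V.smul_mem _ hwV), ?_,
        ((χ (((i : ℕ) • t) h) : ℂ) - (χ (((j : ℕ) • t) h) : ℂ)) * c,
        mul_ne_zero (sub_ne_zero.mpr hneℂ) hc, by rw [hw'app i, hwi]; ring⟩
      intro k hk
      rcases Finset.mem_insert.mp hk with hk | hk
      · rw [hw'app, hk, sub_self, zero_mul]
      · rw [hw'app, hws k hk, mul_zero]
  -- standard basis vectors from nonzero coordinates
  have single_mem : ∀ v ∈ V, ∀ i : Fin n, v i ≠ 0 →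
      (Pi.single i 1 : Fin n → ℂ) ∈ V := by
    intro v hv i hvi
    obtain ⟨w, hwV, hws, c, hc, hwi⟩ :=
      key i (Finset.univ.erase i) (Finset.notMem_erase i _) v hv
    have hw : w = (c * v i) • (Pi.single i 1 : Fin n → ℂ) := by
      funext k
      by_cases hki : k = i
      · subst hki
        simp [hwi, Pi.single_eq_same]
      · have h0 := hws k (Finset.mem_erase.mpr ⟨hki, Finset.mem_univ k⟩)
        simp [h0, Pi.single_eq_of_ne hki]
    have hmem : (c * v i)⁻¹ • w ∈ V := V.smul_mem _ hwV
    rw [hw, smul_smul, inv_mul_cancel₀ (mul_ne_zero hc hvi), one_smul] at hmem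
    exact hmem
  -- U maps e_i to a nonzero multiple of e_{i+1}
  have hstep : ∀ i : Fin n, ∃ c : ℂ, c ≠ 0 ∧
      ((U : Matrix (Fin n) (Fin n) ℂ)).mulVec (Pi.single i 1)
        = c • (Pi.single (i + 1) 1 : Fin n → ℂ) := by
    intro i
    have hcol : ((U : Matrix (Fin n) (Fin n) ℂ)).mulVec (Pi.single i 1)
        = fun a => (U : Matrix (Fin n) (Fin n) ℂ) a i := by
      rw [Matrix.mulVec_single_one]; funext a; rfl
    have hval : ((i + 1 : Fin n) : ℕ) = ((i : ℕ) + 1) % n := by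
      rw [Fin.add_def]
      simp [Fin.val_one', Nat.add_mod]
    by_cases hlast : (i : ℕ) = n - 1
    · refine ⟨(z : ℂ), z.ne_zero, ?_⟩
      have hsucc : ((i + 1 : Fin n) : ℕ) = 0 := by
        have h2 : (i : ℕ) + 1 = n := by omega
        rw [hval, h2, Nat.mod_self]
      rw [hcol]
      funext a
      rw [hU]
      simp only [Matrix.of_apply, Pi.smul_apply, smul_eq_mul]
      by_cases ha : a = i + 1
      · subst ha
        rw [Pi.single_eq_same, mul_one, if_neg (by omega), if_pos ⟨hsucc, hlast⟩]
      · have hav : (a : ℕ) ≠ 0 := by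
          intro h0
          exact ha (Fin.ext (by rw [h0, hsucc]))
        rw [Pi.single_eq_of_ne ha, mul_zero, if_neg (by omega),
          if_neg (by tauto)]
    · refine ⟨1, one_ne_zero, ?_⟩
      have hlt : (i : ℕ) + 1 < n := by omega
      have hsucc : ((i + 1 : Fin n) : ℕ) = (i : ℕ) + 1 := by
        rw [hval, Nat.mod_eq_of_lt hlt]
      rw [hcol]
      funext a
      rw [hU]
      simp only [Matrix.of_apply, Pi.smul_apply, smul_eq_mul, one_mul]
      by_cases ha : a = i + 1
      · subst ha
        rw [Pi.single_eq_same, if_pos hsucc]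
      · have hav : (a : ℕ) ≠ (i : ℕ) + 1 := by
          intro h0
          exact ha (Fin.ext (by rw [h0, hsucc]))
        rw [Pi.single_eq_of_ne ha, if_neg hav, if_neg (by tauto)]
  -- propagate membership around the cycle
  have hcycle : ∀ i : Fin n, (Pi.single i 1 : Fin n → ℂ) ∈ V →
      ∀ j : Fin n, (Pi.single j 1 : Fin n → ℂ) ∈ V := by
    intro i hi j
    have hall : ∀ k : ℕ, (Pi.single (i + (k : Fin n)) 1 : Fin n → ℂ) ∈ V := by
      intro k
      induction k with
      | zero => simpa using hi
      | succ k ihk =>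
        obtain ⟨c, hc, heq⟩ := hstep (i + (k : Fin n))
        have hmem := hUV _ ihk
        rw [heq] at hmem
        have := V.smul_mem c⁻¹ hmem
        rw [smul_smul, inv_mul_cancel₀ hc, one_smul] at this
        have harith : i + ((k : Fin n) + 1) = i + (((k : ℕ) + 1 : ℕ) : Fin n) := by
          push_cast
          ring
        rwa [add_assoc, harith] at this
    have := hall ((j - i : Fin n) : ℕ)
    rwa [Fin.cast_val_eq_self, add_sub_cancel] at this
  -- conclude
  by_cases hbot : V = ⊥
  · exact Or.inl hbot
  · right
    obtain ⟨v, hv, hv0⟩ := Submodule.exists_mem_ne_zero_of_ne_bot hbot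
    obtain ⟨i, hvi⟩ : ∃ i, v i ≠ 0 := by
      by_contra hall
      push_neg at hall
      exact hv0 (funext hall)
    have hall := hcycle i (single_mem v hv i hvi)
    rw [eq_top_iff]
    intro x _
    have hx : x = ∑ j : Fin n, x j • (Pi.single j 1 : Fin n → ℂ) := by
      funext k
      simp [Finset.sum_apply, Pi.single_apply, eq_comm]
    rw [hx]
    exact Submodule.sum_mem V fun j _ => V.smul_mem _ (hall j)
end

section
/- Let n be a positive integer with prime factorization involving distinct primes p₁,…,p_r, and let {A(m)}_{m | n} be finite abelian groups with a compatible system of surjections A(m) → A(m') for m' | m, such that for any m | n and distinct indices i,j with p_i p_j | m, a character of A(m) factoring through both A(m/p_i) and A(m/p_j) also factors through A(m/(p_i p_j)) (and similarly for any subset of primes). Then the number of characters χ : A(n) → S¹ not factoring through A(m) for any proper divisor m of n equals ∑_{k | n, k squarefree} μ(k)·|A(n/k)|, where μ is the Möbius function. -/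
open ArithmeticFunction

private noncomputable def homCircleEquiv (G : Type*) [CommGroup G] [Finite G] :
    (G →* Circle) ≃ AddChar (Additive G) ℂ :=
  (((MulEquiv.multiplicativeAdditive G).monoidHomCongrLeft
      (N := Circle)).toEquiv.symm.trans
    AddChar.toMonoidHomEquiv.symm).trans AddChar.circleEquivComplex.toEquiv

private lemma finite_homCircle (G : Type*) [CommGroup G] [Finite G] :
    Finite (G →* Circle) :=
  Finite.of_equiv _ (homCircleEquiv G).symm

private lemma card_homCircle (G : Type*) [CommGroup G] [Finite G] :
    Nat.card (G →* Circle) = Nat.card G := by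
  cases nonempty_fintype G
  rw [Nat.card_congr (homCircleEquiv G), Nat.card_eq_fintype_card, AddChar.card_eq,
    Nat.card_eq_fintype_card]
  exact Fintype.card_congr (by rfl)

private lemma squarefree_prod_primes {T : Finset ℕ} (h : ∀ p ∈ T, p.Prime) :
    Squarefree (∏ p ∈ T, p) := by
  induction T using Finset.cons_induction with
  | empty => simpa using squarefree_one
  | cons p T hp ih =>
    rw [Finset.prod_cons]
    have hT : ∀ q ∈ T, q.Prime := fun q hq => h q (Finset.mem_cons_of_mem hq)
    have hpp := h p (Finset.mem_cons_self p T)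
    have hcop : Nat.Coprime p (∏ q ∈ T, q) := by
      rw [hpp.coprime_iff_not_dvd]
      intro hd
      obtain ⟨q, hq, hpq⟩ := hpp.prime.exists_mem_finset_dvd hd
      exact hp (((hT q hq).dvd_iff_eq hpp.ne_one).mp hpq ▸ hq)
    exact (Nat.squarefree_mul hcop).mpr ⟨hpp.squarefree, ih hT⟩

private lemma gcd_div_div {n p k : ℕ} (hn : 0 < n) (hcop : Nat.Coprime p k)
    (hpk : p * k ∣ n) : Nat.gcd (n / p) (n / k) = n / (p * k) := by
  obtain ⟨c, hc⟩ := hpk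
  subst hc
  have hp : 0 < p := by
    rcases Nat.eq_zero_or_pos p with h | h
    · simp [h] at hn
    · exact h
  have hk : 0 < k := by
    rcases Nat.eq_zero_or_pos k with h | h
    · simp [h] at hn
    · exact h
  have h1 : p * k * c / p = k * c := by
    rw [mul_assoc, Nat.mul_div_cancel_left _ hp]
  have h2 : p * k * c / k = p * c := by
    rw [mul_comm p k, mul_assoc, Nat.mul_div_cancel_left _ hk]
  have h3 : p * k * c / (p * k) = c := Nat.mul_div_cancel_left _ (Nat.mul_pos hp hk)
  rw [h1, h2, h3, Nat.gcd_mul_right, Nat.Coprime.gcd_eq_one hcop.symm, one_mul]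


private lemma mem_finset_inf {α ι : Type*} [DecidableEq α] [Fintype α] {s : Finset ι}
    {f : ι → Finset α} {a : α} : a ∈ s.inf f ↔ ∀ i ∈ s, a ∈ f i := by
  induction s using Finset.cons_induction <;> simp [*]

/-- Möbius count: for a compatible inverse system of finite abelian groups A(m),
m ∣ n, with surjective transition maps, such that a character factoring through two
quotients factors through the one indexed by the gcd, the number of characters of
A(n) into the circle not factoring through A(m) for any proper divisor m of n equals
∑_{k ∣ n, k squarefree} μ(k)·|A(n/k)|. -/
theorem stmt_16 (n : ℕ) (hn : 0 < n)
    (A : ℕ → Type*) [∀ m, CommGroup (A m)] [∀ m, Finite (A m)]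
    (π : ∀ m m', m' ∣ m → (A m →* A m'))
    (hsurj : ∀ m m' (h' : m' ∣ m), m ∣ n → Function.Surjective (π m m' h'))
    (hid : ∀ m, π m m (dvd_refl m) = MonoidHom.id (A m))
    (hcomp : ∀ m m' m'' (h1 : m' ∣ m) (h2 : m'' ∣ m'),
      (π m' m'' h2).comp (π m m' h1) = π m m'' (h2.trans h1))
    (hgcd : ∀ (m d₁ d₂ : ℕ) (hm : m ∣ n) (h₁ : d₁ ∣ m) (h₂ : d₂ ∣ m)
      (χ : A m →* Circle),
      (∃ ψ : A d₁ →* Circle, χ = ψ.comp (π m d₁ h₁)) →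
      (∃ ψ : A d₂ →* Circle, χ = ψ.comp (π m d₂ h₂)) →
      ∃ ψ : A (Nat.gcd d₁ d₂) →* Circle,
        χ = ψ.comp (π m (Nat.gcd d₁ d₂) ((Nat.gcd_dvd_left d₁ d₂).trans h₁))) :
    (Nat.card {χ : A n →* Circle //
        ¬ ∃ (m : ℕ) (hm : m ∣ n), m ≠ n ∧
          ∃ ψ : A m →* Circle, χ = ψ.comp (π n m hm)} : ℤ)
      = ∑ k ∈ n.divisors.filter Squarefree,
          (moebius k : ℤ) * (Nat.card (A (n / k)) : ℤ) := by
  classical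
  have hn0 : n ≠ 0 := hn.ne'
  have hfinH : Finite (A n →* Circle) := finite_homCircle _
  letI : Fintype (A n →* Circle) := Fintype.ofFinite _
  let F : ℕ → Finset (A n →* Circle) := fun m =>
    Finset.univ.filter (fun χ => ∃ (h : m ∣ n) (ψ : A m →* Circle), χ = ψ.comp (π n m h))
  have memF : ∀ m (χ : A n →* Circle),
      χ ∈ F m ↔ ∃ (h : m ∣ n) (ψ : A m →* Circle), χ = ψ.comp (π n m h) := by
    intro m χ; simp [F]
  have Fmono : ∀ m m', m ∣ m' → m' ∣ n → ∀ χ, χ ∈ F m → χ ∈ F m' := by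
    intro m m' hmm' hm'n χ hχ
    rw [memF] at hχ ⊢
    obtain ⟨h, ψ, rfl⟩ := hχ
    refine ⟨hm'n, ψ.comp (π m' m hmm'), ?_⟩
    rw [MonoidHom.comp_assoc, hcomp]
  have Fcard : ∀ m, m ∣ n → (F m).card = Nat.card (A m) := by
    intro m hm
    have hfin : Finite (A m →* Circle) := finite_homCircle _
    letI : Fintype (A m →* Circle) := Fintype.ofFinite _
    have himg : F m = Finset.univ.image (fun ψ : A m →* Circle => ψ.comp (π n m hm)) := by
      ext χ
      rw [memF, Finset.mem_image]
      constructor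
      · rintro ⟨h, ψ, rfl⟩; exact ⟨ψ, Finset.mem_univ _, rfl⟩
      · rintro ⟨ψ, -, rfl⟩; exact ⟨hm, ψ, rfl⟩
    rw [himg,
      Finset.card_image_of_injective _
        (fun ψ₁ ψ₂ h => (MonoidHom.cancel_right (hsurj n m hm (dvd_refl n))).mp h),
      Finset.card_univ, ← Nat.card_eq_fintype_card, card_homCircle]
  have Finf : ∀ T : Finset ℕ, T ⊆ n.primeFactors →
      T.inf (fun p => F (n / p)) = F (n / ∏ p ∈ T, p) := by
    intro T
    induction T using Finset.cons_induction with
    | empty =>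
      intro _
      rw [Finset.inf_empty, Finset.prod_empty, Nat.div_one]
      ext χ
      simp only [Finset.top_eq_univ, Finset.mem_univ, true_iff]
      rw [memF]
      exact ⟨dvd_refl n, χ, by rw [hid]; exact (MonoidHom.comp_id χ).symm⟩
    | cons p T hpT ih =>
      intro hsub
      have hp : p ∈ n.primeFactors := hsub (Finset.mem_cons_self p T)
      have hTsub : T ⊆ n.primeFactors := fun q hq => hsub (Finset.mem_cons_of_mem hq)
      have hpp : p.Prime := Nat.prime_of_mem_primeFactors hp
      have hTprime : ∀ q ∈ T, q.Prime := fun q hq => Nat.prime_of_mem_primeFactors (hTsub hq)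
      set k := ∏ q ∈ T, q with hk
      have hcop : Nat.Coprime p k := by
        rw [hpp.coprime_iff_not_dvd]
        intro hd
        obtain ⟨q, hq, hpq⟩ := hpp.prime.exists_mem_finset_dvd hd
        exact hpT (((hTprime q hq).dvd_iff_eq hpp.ne_one).mp hpq ▸ hq)
      have hpkdvd : p * k ∣ n := by
        have h1 : ∏ q ∈ Finset.cons p T hpT, q ∣ ∏ q ∈ n.primeFactors, q :=
          Finset.prod_dvd_prod_of_subset _ _ _ hsub
        rw [Finset.prod_cons] at h1
        exact h1.trans (Nat.prod_primeFactors_dvd n)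
      have hgcdval : Nat.gcd (n / p) (n / k) = n / (p * k) := gcd_div_div hn hcop hpkdvd
      have hdvd1 : n / (p * k) ∣ n / p := hgcdval ▸ Nat.gcd_dvd_left _ _
      have hdvd2 : n / (p * k) ∣ n / k := hgcdval ▸ Nat.gcd_dvd_right _ _
      rw [Finset.inf_cons, ih hTsub, Finset.prod_cons, ← hk]
      apply Finset.Subset.antisymm
      · intro χ hχ
        rw [Finset.inf_eq_inter, Finset.mem_inter, memF, memF] at hχ
        obtain ⟨⟨h1, hχ1⟩, ⟨h2, hχ2⟩⟩ := hχ
        have h3 := hgcd n (n / p) (n / k) (dvd_refl n) h1 h2 χ hχ1 hχ2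
        have h4 : χ ∈ F ((n / p).gcd (n / k)) :=
          (memF _ _).mpr ⟨(Nat.gcd_dvd_left _ _).trans h1, h3⟩
        rwa [hgcdval] at h4
      · intro χ hχ
        rw [Finset.inf_eq_inter, Finset.mem_inter]
        have hmem : n / (p * k) ∣ n := Nat.div_dvd_of_dvd hpkdvd
        exact ⟨Fmono _ _ hdvd1 (Nat.div_dvd_of_dvd (dvd_of_mul_right_dvd hpkdvd)) χ hχ,
          Fmono _ _ hdvd2 (Nat.div_dvd_of_dvd (dvd_of_mul_left_dvd hpkdvd)) χ hχ⟩
  have hPset : Finset.univ.filter (fun χ : A n →* Circle =>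
      ¬ ∃ (m : ℕ) (hm : m ∣ n), m ≠ n ∧ ∃ ψ : A m →* Circle, χ = ψ.comp (π n m hm))
      = n.primeFactors.inf (fun p => (F (n / p))ᶜ) := by
    ext χ
    rw [Finset.mem_filter, mem_finset_inf]
    simp only [Finset.mem_univ, true_and, Finset.mem_compl]
    constructor
    · intro hχ p hp
      rw [memF]
      rintro ⟨h, ψ, hψ⟩
      have hpp := Nat.prime_of_mem_primeFactors hp
      exact hχ ⟨n / p, h, Nat.ne_of_lt (Nat.div_lt_self hn hpp.one_lt), ψ, hψ⟩
    · rintro hall ⟨m, hm, hmn, ψ, hψ⟩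
      have hne : n / m ≠ 1 := fun h => hmn (by
        have h2 := Nat.div_mul_cancel hm
        rw [h, one_mul] at h2
        exact h2)
      set p := (n / m).minFac with hpdef
      have hpp : p.Prime := Nat.minFac_prime hne
      have hpd : p ∣ n / m := Nat.minFac_dvd _
      have hpn : p ∣ n := hpd.trans (Nat.div_dvd_of_dvd hm)
      have hpmem : p ∈ n.primeFactors := Nat.mem_primeFactors.mpr ⟨hpp, hpn, hn0⟩
      have hmdvd : m ∣ n / p := by
        rw [Nat.dvd_div_iff_mul_dvd hpn]
        obtain ⟨t, ht⟩ := hpd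
        have h2 : n = m * (n / m) := (Nat.mul_div_cancel' hm).symm
        exact ⟨t, by rw [h2, ht]; ring⟩
      exact hall p hpmem
        (Fmono m (n / p) hmdvd (Nat.div_dvd_of_dvd hpn) χ ((memF m χ).mpr ⟨hm, ψ, hψ⟩))
  calc (Nat.card {χ : A n →* Circle //
        ¬ ∃ (m : ℕ) (hm : m ∣ n), m ≠ n ∧
          ∃ ψ : A m →* Circle, χ = ψ.comp (π n m hm)} : ℤ)
      = ((n.primeFactors.inf fun p => (F (n / p))ᶜ).card : ℤ) := by
        rw [Nat.card_eq_fintype_card, Fintype.card_subtype, hPset]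
    _ = ∑ t ∈ n.primeFactors.powerset,
          (-1 : ℤ) ^ t.card * ((t.inf fun p => F (n / p)).card : ℤ) :=
        Finset.inclusion_exclusion_card_inf_compl _ _
    _ = ∑ t ∈ n.primeFactors.powerset,
          (-1 : ℤ) ^ t.card * (Nat.card (A (n / ∏ p ∈ t, p)) : ℤ) := by
        refine Finset.sum_congr rfl fun t ht => ?_
        rw [Finset.mem_powerset] at ht
        have hdvd : (∏ p ∈ t, p) ∣ n :=
          (Finset.prod_dvd_prod_of_subset _ _ _ ht).trans (Nat.prod_primeFactors_dvd n)
        rw [Finf t ht, Fcard _ (Nat.div_dvd_of_dvd hdvd)]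
    _ = ∑ k ∈ n.divisors.filter Squarefree, (moebius k : ℤ) * (Nat.card (A (n / k)) : ℤ) := by
        refine Finset.sum_nbij' (fun t => ∏ p ∈ t, p) (fun k => k.primeFactors) ?_ ?_ ?_ ?_ ?_
        · intro t ht
          rw [Finset.mem_powerset] at ht
          have hprime : ∀ p ∈ t, p.Prime := fun p hp => Nat.prime_of_mem_primeFactors (ht hp)
          refine Finset.mem_filter.mpr ⟨Nat.mem_divisors.mpr
            ⟨(Finset.prod_dvd_prod_of_subset _ _ _ ht).trans (Nat.prod_primeFactors_dvd n),
              hn0⟩, squarefree_prod_primes hprime⟩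
        · intro k hk
          rw [Finset.mem_filter, Nat.mem_divisors] at hk
          exact Finset.mem_powerset.mpr (Nat.primeFactors_mono hk.1.1 hn0)
        · intro t ht
          rw [Finset.mem_powerset] at ht
          exact Nat.primeFactors_prod (fun p hp => Nat.prime_of_mem_primeFactors (ht hp))
        · intro k hk
          rw [Finset.mem_filter] at hk
          exact Nat.prod_primeFactors_of_squarefree hk.2
        · intro t ht
          rw [Finset.mem_powerset] at ht
          have hmu : (moebius (∏ p ∈ t, p) : ℤ) = (-1 : ℤ) ^ t.card := by
            rw [isMultiplicative_moebius.map_prod_of_subset_primeFactors n t ht]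
            rw [Finset.prod_congr rfl fun p hp =>
              moebius_apply_prime (Nat.prime_of_mem_primeFactors (ht hp))]
            rw [Finset.prod_const]
          rw [hmu]
end

section
/- Fix z ∈ ℂ and r ≥ 1, and let x ∈ S¹ ⊂ ℂ* be an element of infinite multiplicative order with z ≠ 0. Define α : ℤ ⋉ (ℂ[t,t⁻¹]/(t−z)^r) → GL(r+1, ℂ) by sending (0, p) with p represented by ∑_{i=0}^{r−1} a_i (t−z)^i to the matrix which is the identity except the first row is (1, a₀, a₁, …, a_{r−1}), and sending (1, 0) to x times the matrix which is block diagonal with a 1 in the (1,1) entry and an r×r Jordan block with eigenvalue z. Then α is a group homomorphism, where the semidirect product has multiplication (n', h')·(n, h) = (n'+n, z^n·h' + h). -/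
open Matrix LaurentPolynomial

set_option maxHeartbeats 1000000

/-- The ideal ((t−z)^r) in ℂ[t,t⁻¹]. -/
noncomputable def LqIdeal (z : ℂ) (r : ℕ) : Ideal (LaurentPolynomial ℂ) :=
  Ideal.span {((T 1 : LaurentPolynomial ℂ) - LaurentPolynomial.C z) ^ r}

/-- The identity matrix except that the first row is (1, a₀, a₁, …, a_{r−1}). -/
def rowMat (r : ℕ) (a : Fin r → ℂ) : Matrix (Fin (r + 1)) (Fin (r + 1)) ℂ :=
  Matrix.of fun i j : Fin (r + 1) =>
    if i = j then 1
    else if hij : (i : ℕ) = 0 ∧ 0 < (j : ℕ) then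
      a ⟨(j : ℕ) - 1, by have := j.isLt; omega⟩
    else 0

/-- The block-diagonal matrix diag(1, J_r(z)) with J_r(z) the r×r Jordan block
with eigenvalue z. -/
def jordMat (r : ℕ) (z : ℂ) : Matrix (Fin (r + 1)) (Fin (r + 1)) ℂ :=
  Matrix.of fun i j : Fin (r + 1) =>
    if i = j then (if (i : ℕ) = 0 then 1 else z)
    else if (j : ℕ) = (i : ℕ) + 1 ∧ 1 ≤ (i : ℕ) then 1 else 0

/-! ### Auxiliary definitions and lemmas -/

def Emat (r : ℕ) (a : Fin r → ℂ) : Matrix (Fin (r + 1)) (Fin (r + 1)) ℂ :=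
  Matrix.of fun i j : Fin (r + 1) =>
    if hij : (i : ℕ) = 0 ∧ 0 < (j : ℕ) then
      a ⟨(j : ℕ) - 1, by have := j.isLt; omega⟩
    else 0

def Nmat (r : ℕ) : Matrix (Fin (r + 1)) (Fin (r + 1)) ℂ :=
  Matrix.of fun i j : Fin (r + 1) =>
    if (j : ℕ) = (i : ℕ) + 1 ∧ 1 ≤ (i : ℕ) then 1 else 0

noncomputable def shiftf (z : ℂ) (r : ℕ) (a : Fin r → ℂ) : Fin r → ℂ :=
  fun i => z * a i + (if h : (i : ℕ) = 0 then 0 else a ⟨(i : ℕ) - 1, by have := i.isLt; omega⟩)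

lemma rowMat_decomp (r : ℕ) (a : Fin r → ℂ) : rowMat r a = 1 + Emat r a := by
  ext i j
  by_cases hij : i = j
  · subst hij
    have : ¬((i : ℕ) = 0 ∧ 0 < (i : ℕ)) := by omega
    simp [rowMat, Emat, Matrix.one_apply, this]
  · have : ¬ ((i : Fin (r+1)) = j) := hij
    simp [rowMat, Emat, Matrix.one_apply, this]

lemma Emat_add (r : ℕ) (a b : Fin r → ℂ) : Emat r (a + b) = Emat r a + Emat r b := by
  ext i j
  by_cases hij : (i : ℕ) = 0 ∧ 0 < (j : ℕ) <;> simp [Emat, hij, -Fin.val_eq_zero_iff, -Fin.val_pos_iff]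

lemma Emat_mul_Emat (r : ℕ) (a b : Fin r → ℂ) : Emat r a * Emat r b = 0 := by
  ext i j
  rw [Matrix.mul_apply]
  apply Finset.sum_eq_zero
  intro k _
  by_cases hk : (k : ℕ) = 0
  · have : ¬((i : ℕ) = 0 ∧ 0 < (k : ℕ)) := by omega
    simp [Emat, this, -Fin.val_eq_zero_iff, -Fin.val_pos_iff]
  · have : ¬((k : ℕ) = 0 ∧ 0 < (j : ℕ)) := by omega
    simp [Emat, this, -Fin.val_eq_zero_iff, -Fin.val_pos_iff]

lemma rowMat_mul (r : ℕ) (a b : Fin r → ℂ) :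
    rowMat r a * rowMat r b = rowMat r (a + b) := by
  rw [rowMat_decomp, rowMat_decomp, rowMat_decomp, Emat_add, add_mul, mul_add, mul_add,
    one_mul, mul_one, Emat_mul_Emat]
  simp only [one_mul]
  abel

lemma jord_decomp (r : ℕ) (z : ℂ) :
    jordMat r z = Matrix.diagonal (fun i : Fin (r+1) => if (i : ℕ) = 0 then 1 else z)
      + Nmat r := by
  ext i j
  by_cases hij : i = j
  · subst hij
    have : ¬((i : ℕ) = (i : ℕ) + 1 ∧ 1 ≤ (i : ℕ)) := by omega
    simp [jordMat, Nmat, Matrix.diagonal_apply_eq, this]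
  · simp [jordMat, Nmat, Matrix.diagonal_apply_ne _ hij, hij]

lemma jord_mul_Emat (r : ℕ) (z : ℂ) (b : Fin r → ℂ) :
    jordMat r z * Emat r b = Emat r b := by
  rw [jord_decomp, add_mul]
  have h1 : Nmat r * Emat r b = 0 := by
    ext i j
    rw [Matrix.mul_apply]
    apply Finset.sum_eq_zero
    intro k _
    by_cases hk : (k : ℕ) = 0
    · have : ¬((k : ℕ) = (i : ℕ) + 1 ∧ 1 ≤ (i : ℕ)) := by omega
      simp [Nmat, this]
    · have : ¬((k : ℕ) = 0 ∧ 0 < (j : ℕ)) := by omega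
      simp [Emat, this, -Fin.val_eq_zero_iff, -Fin.val_pos_iff]
  rw [h1, add_zero]
  ext i j
  rw [Matrix.diagonal_mul]
  by_cases hi : (i : ℕ) = 0
  · simp [hi]
  · have : ¬((i : ℕ) = 0 ∧ 0 < (j : ℕ)) := by omega
    simp [Emat, this, hi, -Fin.val_eq_zero_iff, -Fin.val_pos_iff]

lemma Emat_mul_jord (r : ℕ) (z : ℂ) (a : Fin r → ℂ) :
    Emat r a * jordMat r z = Emat r (shiftf z r a) := by
  rw [jord_decomp, mul_add]
  ext i j
  have hEN : (Emat r a * Nmat r) i j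
      = Emat r a i ⟨(j : ℕ) - 1, by have := j.isLt; omega⟩
        * Nmat r ⟨(j : ℕ) - 1, by have := j.isLt; omega⟩ j := by
    rw [Matrix.mul_apply]
    apply Finset.sum_eq_single
    · intro k _ hk
      have : ¬((j : ℕ) = (k : ℕ) + 1 ∧ 1 ≤ (k : ℕ)) := by
        intro ⟨h1, h2⟩
        apply hk
        apply Fin.ext
        simp only []
        omega
      simp [Nmat, this]
    · intro h; exact absurd (Finset.mem_univ _) h
  rw [Matrix.add_apply, Matrix.mul_diagonal, hEN]
  by_cases hi : (i : ℕ) = 0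
  · by_cases hj : (j : ℕ) = 0
    · have h1 : ¬((i : ℕ) = 0 ∧ 0 < (j : ℕ)) := by omega
      have h2 : ¬((j : ℕ) = ((j : ℕ) - 1) + 1 ∧ 1 ≤ (j : ℕ) - 1) := by omega
      simp [Emat, Nmat, h1, h2, hj, -Fin.val_eq_zero_iff, -Fin.val_pos_iff]
    · have h1 : (i : ℕ) = 0 ∧ 0 < (j : ℕ) := by omega
      by_cases hj1 : (j : ℕ) = 1
      · have h2 : ¬((i : ℕ) = 0 ∧ 0 < (((j:ℕ) - 1 : ℕ))) := by omega
        simp only [Emat, Nmat, Matrix.of_apply, dif_pos h1, dif_neg h2, zero_mul, add_zero]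
        rw [shiftf]
        have h4 : ((⟨(j : ℕ) - 1, by have := j.isLt; omega⟩ : Fin r) : ℕ) = 0 := by
          simp; omega
        rw [dif_pos h4, add_zero, if_neg hj, mul_comm]
      · have h2 : (i : ℕ) = 0 ∧ 0 < ((j : ℕ) - 1 : ℕ) := by omega
        have h3 : ((j : ℕ) = (((j : ℕ) - 1 : ℕ)) + 1 ∧ 1 ≤ ((j : ℕ) - 1 : ℕ)) := by omega
        simp only [Emat, Nmat, Matrix.of_apply, dif_pos h1, dif_pos h2, if_pos h3, mul_one]
        rw [shiftf]
        have h4 : ¬(((⟨(j : ℕ) - 1, by have := j.isLt; omega⟩ : Fin r) : ℕ) = 0) := by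
          simp; omega
        rw [dif_neg h4, if_neg hj, mul_comm]
  · have h1 : ¬((i : ℕ) = 0 ∧ 0 < (j : ℕ)) := by omega
    have h2 : ¬((i : ℕ) = 0 ∧ 0 < ((j : ℕ) - 1 : ℕ)) := by omega
    simp only [Emat, Matrix.of_apply, Fin.val_mk] at *
    rw [dif_neg h1]
    rw [dif_neg h2]
    rw [dif_neg h1]
    simp

lemma rowMat_mul_jord (r : ℕ) (z : ℂ) (a : Fin r → ℂ) :
    rowMat r a * jordMat r z = jordMat r z * rowMat r (shiftf z r a) := by
  rw [rowMat_decomp, rowMat_decomp, add_mul, mul_add, one_mul, mul_one,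
    Emat_mul_jord, jord_mul_Emat]

lemma hu_pow (z : ℂ) (r : ℕ) :
    (Ideal.Quotient.mk (LqIdeal z r) ((T 1 : LaurentPolynomial ℂ) - LaurentPolynomial.C z)) ^ r
      = 0 := by
  rw [← map_pow]
  exact Ideal.Quotient.eq_zero_iff_mem.2 (Ideal.subset_span rfl)

lemma smul_mk (z : ℂ) (r : ℕ) (c : ℂ) (q : LaurentPolynomial ℂ ⧸ LqIdeal z r) :
    Ideal.Quotient.mk (LqIdeal z r) (LaurentPolynomial.C c) * q = c • q := by
  have : algebraMap ℂ (LaurentPolynomial ℂ ⧸ LqIdeal z r) c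
      = Ideal.Quotient.mk (LqIdeal z r) (LaurentPolynomial.C c) := by
    rw [IsScalarTower.algebraMap_apply ℂ (LaurentPolynomial ℂ) (LaurentPolynomial ℂ ⧸ LqIdeal z r),
      Ideal.Quotient.algebraMap_eq, C_eq_algebraMap]
  rw [← this, ← Algebra.smul_def]

lemma repr_surj (z : ℂ) (r : ℕ) (hz : z ≠ 0) (h : LaurentPolynomial ℂ ⧸ LqIdeal z r) :
    ∃ a : Fin r → ℂ, h = Ideal.Quotient.mk (LqIdeal z r)
      (∑ i : Fin r, LaurentPolynomial.C (a i)
        * ((T 1 : LaurentPolynomial ℂ) - LaurentPolynomial.C z) ^ (i : ℕ)) := by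
  set u : LaurentPolynomial ℂ ⧸ LqIdeal z r :=
    Ideal.Quotient.mk (LqIdeal z r) ((T 1 : LaurentPolynomial ℂ) - LaurentPolynomial.C z)
    with hu_def
  have hu : u ^ r = 0 := hu_pow z r
  set Q : Submodule ℂ (LaurentPolynomial ℂ ⧸ LqIdeal z r) :=
    Submodule.span ℂ (Set.range fun i : Fin r => u ^ (i : ℕ)) with hQ_def
  have hpowQ : ∀ k : ℕ, u ^ k ∈ Q := by
    intro k
    rcases lt_or_ge k r with hk | hk
    · exact Submodule.subset_span ⟨⟨k, hk⟩, rfl⟩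
    · have : u ^ k = 0 := by
        rw [← Nat.add_sub_cancel' hk, pow_add, hu, zero_mul]
      rw [this]; exact Submodule.zero_mem Q
  have hmulu : ∀ k : ℕ, ∀ q ∈ Q, u ^ k * q ∈ Q := by
    intro k q hq
    induction hq using Submodule.span_induction with
    | mem w hw =>
      obtain ⟨i, rfl⟩ := hw
      rw [← pow_add]; exact hpowQ _
    | zero => rw [mul_zero]; exact Submodule.zero_mem Q
    | add a b _ _ ha hb => rw [mul_add]; exact Submodule.add_mem Q ha hb
    | smul c a _ ha => rw [mul_smul_comm]; exact Submodule.smul_mem Q c ha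
  have hT1 : Ideal.Quotient.mk (LqIdeal z r) (T 1)
      = Ideal.Quotient.mk (LqIdeal z r) (LaurentPolynomial.C z) + u := by
    rw [hu_def, ← map_add]; ring_nf
  have hQmulT : ∀ q ∈ Q, Ideal.Quotient.mk (LqIdeal z r) (T 1) * q ∈ Q := by
    intro q hq
    rw [hT1, add_mul, smul_mk]
    exact Submodule.add_mem Q (Submodule.smul_mem Q z hq)
      (by simpa using hmulu 1 q hq)
  set w : LaurentPolynomial ℂ ⧸ LqIdeal z r :=
    ∑ k : Fin r, ((-1 : ℂ) ^ (k : ℕ) * (z ^ ((k : ℕ) + 1))⁻¹) • u ^ (k : ℕ) with hw_def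
  set g : ℕ → LaurentPolynomial ℂ ⧸ LqIdeal z r :=
    fun k => ((-1 : ℂ) ^ k * (z ^ k)⁻¹) • u ^ k with hg_def
  have hwinv : Ideal.Quotient.mk (LqIdeal z r) (T 1) * w = 1 := by
    have step : ∀ k : ℕ,
        Ideal.Quotient.mk (LqIdeal z r) (T 1)
          * (((-1 : ℂ) ^ k * (z ^ (k + 1))⁻¹) • u ^ k) = g k - g (k + 1) := by
      intro k
      rw [hT1, add_mul, mul_smul_comm, smul_mk, smul_smul, mul_smul_comm, ← pow_succ',
        hg_def]
      have e1 : ((-1 : ℂ) ^ k * (z ^ (k + 1))⁻¹ * z) = (-1 : ℂ) ^ k * (z ^ k)⁻¹ := by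
        field_simp
        ring
      have e2 : ((-1 : ℂ) ^ k * (z ^ (k + 1))⁻¹) = -((-1 : ℂ) ^ (k+1) * (z ^ (k + 1))⁻¹) := by
        ring
      rw [e1, e2, neg_smul, sub_eq_add_neg]
    rw [hw_def, Finset.mul_sum]
    rw [Fin.sum_univ_eq_sum_range
      (fun k => Ideal.Quotient.mk (LqIdeal z r) (T 1)
        * (((-1 : ℂ) ^ k * (z ^ (k + 1))⁻¹) • u ^ k))]
    simp_rw [step]
    rw [Finset.sum_range_sub' g]
    have hg0 : g 0 = 1 := by simp [hg_def]
    have hgr : g r = 0 := by rw [hg_def]; simp [hu]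
    rw [hg0, hgr, sub_zero]
  have hQmulW : ∀ q ∈ Q, w * q ∈ Q := by
    intro q hq
    rw [hw_def, Finset.sum_mul]
    exact Submodule.sum_mem Q fun k _ => by
      rw [smul_mul_assoc]; exact Submodule.smul_mem Q _ (hmulu _ _ hq)
  have hTm1 : Ideal.Quotient.mk (LqIdeal z r) (T (-1)) = w := by
    have hT01 : (T (-1) * T 1 : LaurentPolynomial ℂ) = 1 := by
      rw [← T_add]; norm_num [T_zero]
    calc Ideal.Quotient.mk (LqIdeal z r) (T (-1))
        = Ideal.Quotient.mk (LqIdeal z r) (T (-1))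
            * Ideal.Quotient.mk (LqIdeal z r) (T 1) * w := by rw [mul_assoc, hwinv, mul_one]
      _ = Ideal.Quotient.mk (LqIdeal z r) (T (-1) * T 1) * w := by rw [_root_.map_mul]
      _ = w := by rw [hT01, _root_.map_one, one_mul]
  have h1Q : (1 : LaurentPolynomial ℂ ⧸ LqIdeal z r) ∈ Q := by simpa using hpowQ 0
  have hTn : ∀ n : ℤ, Ideal.Quotient.mk (LqIdeal z r) (T n) ∈ Q := by
    intro n
    induction n using Int.induction_on with
    | zero => rw [T_zero, _root_.map_one]; exact h1Q
    | succ n ih =>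
      have : (T ((n : ℤ) + 1) : LaurentPolynomial ℂ) = T 1 * T n := by
        rw [← T_add]; ring_nf
      rw [this, _root_.map_mul]; exact hQmulT _ ih
    | pred n ih =>
      have : (T (-(n : ℤ) - 1) : LaurentPolynomial ℂ) = T (-1) * T (-n) := by
        rw [← T_add]; ring_nf
      rw [this, _root_.map_mul, hTm1]; exact hQmulW _ ih
  have hTop : ∀ p : LaurentPolynomial ℂ, Ideal.Quotient.mk (LqIdeal z r) p ∈ Q := by
    intro p
    induction p using LaurentPolynomial.induction_on' with
    | add p q hp hq => rw [map_add]; exact Submodule.add_mem Q hp hq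
    | C_mul_T n a => rw [_root_.map_mul, smul_mk]; exact Submodule.smul_mem Q a (hTn n)
  obtain ⟨p, rfl⟩ := Ideal.Quotient.mk_surjective h
  have := hTop p
  rw [hQ_def, Submodule.mem_span_range_iff_exists_fun ℂ] at this
  obtain ⟨a, ha⟩ := this
  refine ⟨a, ?_⟩
  rw [map_sum]
  simp_rw [_root_.map_mul, map_pow, smul_mk]
  exact ha.symm

lemma repr_sum (z : ℂ) (r : ℕ) (a : Fin r → ℂ) :
    Ideal.Quotient.mk (LqIdeal z r) (∑ i : Fin r, LaurentPolynomial.C (a i)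
      * ((T 1 : LaurentPolynomial ℂ) - LaurentPolynomial.C z) ^ (i : ℕ))
    = ∑ i : Fin r, a i •
        (Ideal.Quotient.mk (LqIdeal z r) ((T 1 : LaurentPolynomial ℂ) - LaurentPolynomial.C z))
          ^ (i : ℕ) := by
  rw [map_sum]
  refine Finset.sum_congr rfl fun i _ => ?_
  rw [_root_.map_mul, map_pow, smul_mk]

lemma repr_add (z : ℂ) (r : ℕ) (a b : Fin r → ℂ) :
    Ideal.Quotient.mk (LqIdeal z r) (∑ i : Fin r, LaurentPolynomial.C (a i)
      * ((T 1 : LaurentPolynomial ℂ) - LaurentPolynomial.C z) ^ (i : ℕ))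
    + Ideal.Quotient.mk (LqIdeal z r) (∑ i : Fin r, LaurentPolynomial.C (b i)
      * ((T 1 : LaurentPolynomial ℂ) - LaurentPolynomial.C z) ^ (i : ℕ))
    = Ideal.Quotient.mk (LqIdeal z r) (∑ i : Fin r, LaurentPolynomial.C ((a + b) i)
      * ((T 1 : LaurentPolynomial ℂ) - LaurentPolynomial.C z) ^ (i : ℕ)) := by
  rw [repr_sum, repr_sum, repr_sum, ← Finset.sum_add_distrib]
  refine Finset.sum_congr rfl fun i _ => ?_
  rw [Pi.add_apply, add_smul]

lemma repr_Tmul (z : ℂ) (r : ℕ) (a : Fin r → ℂ) :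
    Ideal.Quotient.mk (LqIdeal z r) (T 1)
      * Ideal.Quotient.mk (LqIdeal z r) (∑ i : Fin r, LaurentPolynomial.C (a i)
        * ((T 1 : LaurentPolynomial ℂ) - LaurentPolynomial.C z) ^ (i : ℕ))
    = Ideal.Quotient.mk (LqIdeal z r) (∑ i : Fin r, LaurentPolynomial.C (shiftf z r a i)
        * ((T 1 : LaurentPolynomial ℂ) - LaurentPolynomial.C z) ^ (i : ℕ)) := by
  set u : LaurentPolynomial ℂ ⧸ LqIdeal z r :=
    Ideal.Quotient.mk (LqIdeal z r) ((T 1 : LaurentPolynomial ℂ) - LaurentPolynomial.C z)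
    with hu_def
  have hu : u ^ r = 0 := hu_pow z r
  have hT1 : Ideal.Quotient.mk (LqIdeal z r) (T 1)
      = Ideal.Quotient.mk (LqIdeal z r) (LaurentPolynomial.C z) + u := by
    rw [hu_def, ← map_add]; ring_nf
  rw [repr_sum, repr_sum, hT1, add_mul, Finset.mul_sum, Finset.mul_sum]
  set na : ℕ → ℂ := fun i => if h : i < r then a ⟨i, h⟩ else 0 with hna_def
  have hna : ∀ i : Fin r, a i = na (i : ℕ) := fun i => by
    rw [hna_def]; simp [i.isLt]
  have e1 : ∀ i : Fin r,
      Ideal.Quotient.mk (LqIdeal z r) (LaurentPolynomial.C z) * (a i • u ^ (i : ℕ))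
        = (z * na (i : ℕ)) • u ^ (i : ℕ) := by
    intro i
    rw [mul_smul_comm, smul_mk, smul_smul, hna, mul_comm]
  have e2 : ∀ i : Fin r, u * (a i • u ^ (i : ℕ)) = na (i : ℕ) • u ^ ((i : ℕ) + 1) := by
    intro i
    rw [mul_smul_comm, ← pow_succ', hna]
  simp_rw [← hu_def, e1, e2]
  rw [Fin.sum_univ_eq_sum_range (fun i => (z * na i) • u ^ i),
    Fin.sum_univ_eq_sum_range (fun i => na i • u ^ (i + 1))]
  set gb : ℕ → LaurentPolynomial ℂ ⧸ LqIdeal z r :=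
    fun i => (if i = 0 then 0 else na (i - 1)) • u ^ i with hgb_def
  have e3 : ∀ i ∈ Finset.range r, na i • u ^ (i + 1) = gb (i + 1) := by
    intro i _
    rw [hgb_def]; simp
  rw [Finset.sum_congr rfl e3]
  have gb0 : gb 0 = 0 := by rw [hgb_def]; simp
  have gbr : gb r = 0 := by rw [hgb_def]; simp [hu]
  have h4 : ∑ x ∈ Finset.range r, gb (x + 1) = ∑ i ∈ Finset.range r, gb i := by
    calc ∑ x ∈ Finset.range r, gb (x + 1)
        = ∑ x ∈ Finset.range r, gb (x + 1) + gb 0 := by rw [gb0, add_zero]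
      _ = ∑ x ∈ Finset.range (r + 1), gb x := (Finset.sum_range_succ' gb r).symm
      _ = ∑ x ∈ Finset.range r, gb x + gb r := Finset.sum_range_succ gb r
      _ = ∑ x ∈ Finset.range r, gb x := by rw [gbr, add_zero]
  rw [h4, ← Finset.sum_add_distrib]
  set ns : ℕ → ℂ := fun i => if h : i < r then shiftf z r a ⟨i, h⟩ else 0 with hns_def
  have e5 : ∀ i : Fin r, shiftf z r a i • u ^ (i : ℕ) = ns (i : ℕ) • u ^ (i : ℕ) := by
    intro i
    rw [hns_def]
    simp [i.isLt]
  rw [Finset.sum_congr rfl fun i _ => e5 i,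
    Fin.sum_univ_eq_sum_range (fun i => ns i • u ^ i)]
  refine Finset.sum_congr rfl fun i hi => ?_
  rw [Finset.mem_range] at hi
  rw [hgb_def, ← add_smul, hns_def]
  simp only [dif_pos hi]
  rw [shiftf]
  congr 1
  rw [hna_def]
  simp only [hi, dif_pos]
  by_cases hi0 : i = 0
  · simp [hi0]
  · simp [hi0, show i - 1 < r by omega]

/-- The map α : ℤ ⋉ (ℂ[t,t⁻¹]/(t−z)^r) → GL(r+1,ℂ) with α(0,∑aᵢ(t−z)ⁱ) the
identity-with-first-row matrix, α(1,0) = x·(1 ⊕ J_r(z)) and α(j,h)=α(1,0)ʲα(0,h),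
is a group homomorphism for the semidirect multiplication
(n',h')·(n,h) = (n'+n, tⁿ·h' + h). -/
theorem stmt_17 (r : ℕ) (hr : 1 ≤ r) (z x : ℂ) (hz : z ≠ 0)
    (hx : ‖x‖ = 1) (hxord : ∀ m : ℕ, m ≠ 0 → x ^ m ≠ 1)
    (α : ℤ × (LaurentPolynomial ℂ ⧸ LqIdeal z r) → GL (Fin (r + 1)) ℂ)
    (h0 : ∀ a : Fin r → ℂ,
      (α (0, Ideal.Quotient.mk (LqIdeal z r)
          (∑ i : Fin r, LaurentPolynomial.C (a i)
            * ((T 1 : LaurentPolynomial ℂ) - LaurentPolynomial.C z) ^ (i : ℕ)))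
        : Matrix (Fin (r + 1)) (Fin (r + 1)) ℂ) = rowMat r a)
    (h1 : (α (1, 0) : Matrix (Fin (r + 1)) (Fin (r + 1)) ℂ) = x • jordMat r z)
    (hgen : ∀ (j : ℤ) (h : LaurentPolynomial ℂ ⧸ LqIdeal z r),
      α (j, h) = (α (1, 0)) ^ j * α (0, h)) :
    ∀ (j₁ j₂ : ℤ) (h₁ h₂ : LaurentPolynomial ℂ ⧸ LqIdeal z r),
      α (j₁ + j₂, Ideal.Quotient.mk (LqIdeal z r) (T j₂) * h₁ + h₂)
        = α (j₁, h₁) * α (j₂, h₂) := by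
  intro j₁ j₂ h₁ h₂
  set A := α (1, 0) with hA_def
  -- the swap relation
  have hswap : ∀ h : LaurentPolynomial ℂ ⧸ LqIdeal z r,
      α (0, h) * A = A * α (0, Ideal.Quotient.mk (LqIdeal z r) (T 1) * h) := by
    intro h
    obtain ⟨a, rfl⟩ := repr_surj z r hz h
    apply Units.ext
    rw [Units.val_mul, Units.val_mul, repr_Tmul z r a, h0 a, h0 (shiftf z r a), hA_def, h1,
      Matrix.mul_smul, Matrix.smul_mul, rowMat_mul_jord]
  -- multiplicativity of h ↦ α (0, h)
  have hBadd : ∀ h h' : LaurentPolynomial ℂ ⧸ LqIdeal z r,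
      α (0, h + h') = α (0, h) * α (0, h') := by
    intro h h'
    obtain ⟨a, rfl⟩ := repr_surj z r hz h
    obtain ⟨b, rfl⟩ := repr_surj z r hz h'
    apply Units.ext
    rw [Units.val_mul, repr_add z r a b, h0 a, h0 b, h0 (a + b), rowMat_mul]
  -- the shift relation for all integer powers
  have hshift : ∀ n : ℤ, ∀ h : LaurentPolynomial ℂ ⧸ LqIdeal z r,
      α (0, h) * A ^ n = A ^ n * α (0, Ideal.Quotient.mk (LqIdeal z r) (T n) * h) := by
    intro n
    induction n using Int.induction_on with
    | zero =>
      intro h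
      simp [T_zero]
    | succ n ih =>
      intro h
      have hT : Ideal.Quotient.mk (LqIdeal z r) (T ((n : ℤ) + 1)) * h
          = Ideal.Quotient.mk (LqIdeal z r) (T 1)
            * (Ideal.Quotient.mk (LqIdeal z r) (T (n : ℤ)) * h) := by
        rw [← mul_assoc, ← _root_.map_mul, ← T_add, add_comm]
      rw [hT, _root_.zpow_add_one, ← mul_assoc, ih h, mul_assoc, hswap, ← mul_assoc]
    | pred n ih =>
      intro h
      have key := hswap (Ideal.Quotient.mk (LqIdeal z r) (T (-(n : ℤ) - 1)) * h)
      have hT : Ideal.Quotient.mk (LqIdeal z r) (T 1)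
          * (Ideal.Quotient.mk (LqIdeal z r) (T (-(n : ℤ) - 1)) * h)
          = Ideal.Quotient.mk (LqIdeal z r) (T (-(n : ℤ))) * h := by
        rw [← mul_assoc, ← _root_.map_mul, ← T_add]
        norm_num
      rw [hT] at key
      have key2 : α (0, Ideal.Quotient.mk (LqIdeal z r) (T (-(n : ℤ))) * h)
          = A⁻¹ * α (0, Ideal.Quotient.mk (LqIdeal z r) (T (-(n : ℤ) - 1)) * h) * A := by
        rw [mul_assoc, key, ← mul_assoc, inv_mul_cancel, one_mul]
      rw [_root_.zpow_sub_one, ← mul_assoc, ih h, key2]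
      calc A ^ (-(n : ℤ)) * (A⁻¹ * α (0, Ideal.Quotient.mk (LqIdeal z r) (T (-(n : ℤ) - 1)) * h)
              * A) * A⁻¹
          = A ^ (-(n : ℤ)) * A⁻¹ * α (0, Ideal.Quotient.mk (LqIdeal z r) (T (-(n : ℤ) - 1)) * h)
              * (A * A⁻¹) := by
            simp only [mul_assoc]
        _ = A ^ (-(n : ℤ)) * A⁻¹
              * α (0, Ideal.Quotient.mk (LqIdeal z r) (T (-(n : ℤ) - 1)) * h) := by
            rw [mul_inv_cancel, mul_one]
  calc α (j₁ + j₂, Ideal.Quotient.mk (LqIdeal z r) (T j₂) * h₁ + h₂)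
      = A ^ (j₁ + j₂) * α (0, Ideal.Quotient.mk (LqIdeal z r) (T j₂) * h₁ + h₂) := hgen _ _
    _ = A ^ j₁ * A ^ j₂ * (α (0, Ideal.Quotient.mk (LqIdeal z r) (T j₂) * h₁) * α (0, h₂)) := by
        rw [hBadd, _root_.zpow_add]
    _ = A ^ j₁ * (A ^ j₂ * α (0, Ideal.Quotient.mk (LqIdeal z r) (T j₂) * h₁)) * α (0, h₂) := by
        simp only [mul_assoc]
    _ = A ^ j₁ * (α (0, h₁) * A ^ j₂) * α (0, h₂) := by rw [← hshift j₂ h₁]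
    _ = (A ^ j₁ * α (0, h₁)) * (A ^ j₂ * α (0, h₂)) := by simp only [mul_assoc]
    _ = α (j₁, h₁) * α (j₂, h₂) := by rw [hgen j₁, hgen j₂, hA_def]
end

section
/- The representation α : ℤ ⋉ (ℂ[t,t⁻¹]/(t−z)^r) → GL(r+1,ℂ) defined in the previous statement is injective (faithful), provided x ∈ S¹ has infinite order and z ≠ 0. -/
set_option maxHeartbeats 1000000


open Matrix LaurentPolynomial

lemma mul_row0 {n : ℕ} (M N : Matrix (Fin (n+1)) (Fin (n+1)) ℂ) (c : ℂ)
    (hM : ∀ l, M 0 l = if l = 0 then c else 0) (k : Fin (n+1)) :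
    (M * N) 0 k = c * N 0 k := by
  rw [Matrix.mul_apply, Finset.sum_eq_single 0]
  · rw [hM 0, if_pos rfl]
  · intro b _ hb; rw [hM b, if_neg hb, zero_mul]
  · simp

lemma row0_inv {n : ℕ} (M : GL (Fin (n+1)) ℂ) (c : ℂ) (hc : c ≠ 0)
    (hM : ∀ l, (M : Matrix (Fin (n+1)) (Fin (n+1)) ℂ) 0 l = if l = 0 then c else 0)
    (k : Fin (n+1)) :
    ((M⁻¹ : GL (Fin (n+1)) ℂ) : Matrix (Fin (n+1)) (Fin (n+1)) ℂ) 0 k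
      = if k = 0 then c⁻¹ else 0 := by
  have h1 : (M : Matrix (Fin (n+1)) (Fin (n+1)) ℂ) * (M⁻¹ : GL (Fin (n+1)) ℂ) = 1 := by
    rw [← Units.val_mul, mul_inv_cancel, Units.val_one]
  have h2 := mul_row0 (M : Matrix (Fin (n+1)) (Fin (n+1)) ℂ)
    ((M⁻¹ : GL (Fin (n+1)) ℂ) : Matrix (Fin (n+1)) (Fin (n+1)) ℂ) c hM k
  rw [h1] at h2
  rcases eq_or_ne k 0 with h | h
  · subst h
    rw [Matrix.one_apply_eq] at h2
    rw [if_pos rfl]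
    exact (inv_eq_of_mul_eq_one_right h2.symm).symm
  · rw [Matrix.one_apply_ne (Ne.symm h)] at h2
    rw [if_neg h]
    exact (mul_eq_zero.mp h2.symm).resolve_left hc

lemma row0_pow {n : ℕ} (M : GL (Fin (n+1)) ℂ) (c : ℂ)
    (hM : ∀ l, (M : Matrix (Fin (n+1)) (Fin (n+1)) ℂ) 0 l = if l = 0 then c else 0)
    (m : ℕ) (k : Fin (n+1)) :
    ((M ^ m : GL (Fin (n+1)) ℂ) : Matrix (Fin (n+1)) (Fin (n+1)) ℂ) 0 k
      = if k = 0 then c ^ m else 0 := by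
  induction m with
  | zero => simp [Matrix.one_apply, eq_comm]
  | succ m ih =>
      have : (M ^ (m+1) : GL (Fin (n+1)) ℂ) = M * M ^ m := by rw [pow_succ']
      rw [this, Units.val_mul, mul_row0 _ _ c hM k, ih]
      split_ifs
      · ring
      · ring

lemma row0_zpow {n : ℕ} (M : GL (Fin (n+1)) ℂ) (c : ℂ) (hc : c ≠ 0)
    (hM : ∀ l, (M : Matrix (Fin (n+1)) (Fin (n+1)) ℂ) 0 l = if l = 0 then c else 0)
    (j : ℤ) (k : Fin (n+1)) :
    ((M ^ j : GL (Fin (n+1)) ℂ) : Matrix (Fin (n+1)) (Fin (n+1)) ℂ) 0 k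
      = if k = 0 then c ^ j else 0 := by
  cases j with
  | ofNat m => rw [Int.ofNat_eq_coe, zpow_natCast, zpow_natCast]; exact row0_pow M c hM m k
  | negSucc m =>
      rw [zpow_negSucc, zpow_negSucc]
      exact row0_inv (M ^ (m+1)) (c ^ (m+1)) (pow_ne_zero _ hc) (row0_pow M c hM (m+1)) k

lemma surj_aux (z : ℂ) (r : ℕ) (hr : 1 ≤ r) (hz : z ≠ 0)
    (h : LaurentPolynomial ℂ ⧸ LqIdeal z r) :
    ∃ a : Fin r → ℂ, Ideal.Quotient.mk (LqIdeal z r)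
      (∑ i : Fin r, LaurentPolynomial.C (a i)
        * ((T 1 : LaurentPolynomial ℂ) - LaurentPolynomial.C z) ^ (i : ℕ)) = h := by
  set mk := Ideal.Quotient.mk (LqIdeal z r) with hmk
  set u : LaurentPolynomial ℂ ⧸ LqIdeal z r :=
    mk ((T 1 : LaurentPolynomial ℂ) - LaurentPolynomial.C z) with hu_def
  have hur : u ^ r = 0 := by
    rw [hu_def, ← map_pow]
    exact Ideal.Quotient.eq_zero_iff_mem.2 (Ideal.subset_span rfl)
  have key : ∀ p : Polynomial ℂ, ∃ a : Fin r → ℂ,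
      mk (∑ i : Fin r, LaurentPolynomial.C (a i)
        * ((T 1 : LaurentPolynomial ℂ) - LaurentPolynomial.C z) ^ (i : ℕ))
      = Polynomial.aeval u p := by
    intro p
    refine ⟨fun i => p.coeff i, ?_⟩
    have hn : p.natDegree < p.natDegree + r + 1 := by omega
    rw [Polynomial.aeval_eq_sum_range' hn, map_sum]
    have hterm : ∀ i : ℕ, mk (LaurentPolynomial.C (p.coeff i)
        * ((T 1 : LaurentPolynomial ℂ) - LaurentPolynomial.C z) ^ i)
        = p.coeff i • u ^ i := by
      intro i
      rw [_root_.map_mul, map_pow, ← hu_def, C_eq_algebraMap, Ideal.Quotient.mk_algebraMap,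
        ← Algebra.smul_def]
    calc (∑ i : Fin r, mk (LaurentPolynomial.C (p.coeff (i:ℕ))
            * ((T 1 : LaurentPolynomial ℂ) - LaurentPolynomial.C z) ^ (i:ℕ)))
        = ∑ i ∈ Finset.range r, p.coeff i • u ^ i := by
          rw [← Fin.sum_univ_eq_sum_range]
          exact Finset.sum_congr rfl fun i _ => hterm i
      _ = ∑ i ∈ Finset.range (p.natDegree + r + 1), p.coeff i • u ^ i := by
          refine Finset.sum_subset (Finset.range_subset_range.2 (by omega)) ?_
          intro i _ hi
          rw [Finset.mem_range, not_lt] at hi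
          have : u ^ i = 0 := by
            rw [show i = r + (i - r) by omega, pow_add, hur, zero_mul]
          rw [this, smul_zero]
  have humem : u ∈ (Polynomial.aeval u : Polynomial ℂ →ₐ[ℂ] _).range :=
    ⟨Polynomial.X, Polynomial.aeval_X u⟩
  have hT1eq : mk (T 1) = u + algebraMap ℂ _ z := by
    rw [hu_def, map_sub, C_eq_algebraMap, Ideal.Quotient.mk_algebraMap, sub_add_cancel]
  have hT1 : mk (T 1) ∈ (Polynomial.aeval u : Polynomial ℂ →ₐ[ℂ] _).range := by
    rw [hT1eq]
    exact add_mem humem (Subalgebra.algebraMap_mem _ z)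
  set v : LaurentPolynomial ℂ ⧸ LqIdeal z r :=
    algebraMap ℂ (LaurentPolynomial ℂ ⧸ LqIdeal z r) (-z⁻¹) * u with hv_def
  have hvr : v ^ r = 0 := by rw [hv_def, mul_pow, hur, mul_zero]
  have hg := geom_sum_mul v r
  rw [hvr, zero_sub] at hg
  have hv1 : v - 1 = algebraMap ℂ (LaurentPolynomial ℂ ⧸ LqIdeal z r) (-z⁻¹) * mk (T 1) := by
    have hzz : (-z⁻¹) * z = -1 := by field_simp
    rw [hT1eq, mul_add, ← _root_.map_mul, hzz, hv_def,
      show (algebraMap ℂ (LaurentPolynomial ℂ ⧸ LqIdeal z r)) (-1) = -1 from by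
        rw [_root_.map_neg, _root_.map_one]]
    ring
  set w : LaurentPolynomial ℂ ⧸ LqIdeal z r := -((∑ i ∈ Finset.range r, v ^ i) * algebraMap ℂ (LaurentPolynomial ℂ ⧸ LqIdeal z r) (-z⁻¹)) with hw_def
  have hw : w * mk (T 1) = 1 := by
    rw [hv1] at hg
    rw [hw_def]
    linear_combination -hg
  have h4 : mk (T 1) * mk (T (-1)) = 1 := by
    rw [← _root_.map_mul, ← T_add]
    norm_num [T_zero]
  have hTm1eq : mk (T (-1)) = w := by
    have h3 : w * (mk (T 1) * mk (T (-1))) = mk (T (-1)) := by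
      rw [← mul_assoc, hw, one_mul]
    rw [h4, mul_one] at h3
    exact h3.symm
  have hTm1 : mk (T (-1)) ∈ (Polynomial.aeval u : Polynomial ℂ →ₐ[ℂ] _).range := by
    rw [hTm1eq, hw_def]
    exact neg_mem (mul_mem (sum_mem fun i _ =>
      pow_mem (mul_mem (Subalgebra.algebraMap_mem _ _) humem) i)
      (Subalgebra.algebraMap_mem _ _))
  have hTmem : ∀ n : ℤ, mk (T n) ∈ (Polynomial.aeval u : Polynomial ℂ →ₐ[ℂ] _).range := by
    intro n
    cases n with
    | ofNat m =>
        rw [show (Int.ofNat m) = (m : ℤ) * 1 by simp, ← T_pow, _root_.map_pow]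
        exact pow_mem hT1 m
    | negSucc m =>
        rw [show (Int.negSucc m) = ((m + 1 : ℕ) : ℤ) * (-1) by
          simp [Int.negSucc_eq], ← T_pow, _root_.map_pow]
        exact pow_mem hTm1 (m + 1)
  obtain ⟨q, hq⟩ := Ideal.Quotient.mk_surjective h
  have hq_mem : mk q ∈ (Polynomial.aeval u : Polynomial ℂ →ₐ[ℂ] _).range := by
    refine q.induction_on' (fun p₁ p₂ hp₁ hp₂ => ?_) (fun n a => ?_)
    · rw [map_add]; exact add_mem hp₁ hp₂
    · rw [_root_.map_mul]
      refine mul_mem ?_ (hTmem n)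
      rw [C_eq_algebraMap, Ideal.Quotient.mk_algebraMap]
      exact Subalgebra.algebraMap_mem _ a
  obtain ⟨p, hp⟩ := hq_mem
  obtain ⟨a, ha⟩ := key p
  exact ⟨a, by rw [ha]; exact hp.trans hq⟩


/-- The representation α : ℤ ⋉ (ℂ[t,t⁻¹]/(t−z)^r) → GL(r+1,ℂ) of the previous
statement is faithful, provided x ∈ S¹ has infinite order and z ≠ 0. -/
theorem stmt_18 (r : ℕ) (hr : 1 ≤ r) (z x : ℂ) (hz : z ≠ 0)
    (hx : ‖x‖ = 1) (hxord : ∀ m : ℕ, m ≠ 0 → x ^ m ≠ 1)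
    (α : ℤ × (LaurentPolynomial ℂ ⧸ LqIdeal z r) → GL (Fin (r + 1)) ℂ)
    (h0 : ∀ a : Fin r → ℂ,
      (α (0, Ideal.Quotient.mk (LqIdeal z r)
          (∑ i : Fin r, LaurentPolynomial.C (a i)
            * ((T 1 : LaurentPolynomial ℂ) - LaurentPolynomial.C z) ^ (i : ℕ)))
        : Matrix (Fin (r + 1)) (Fin (r + 1)) ℂ) = rowMat r a)
    (h1 : (α (1, 0) : Matrix (Fin (r + 1)) (Fin (r + 1)) ℂ) = x • jordMat r z)
    (hgen : ∀ (j : ℤ) (h : LaurentPolynomial ℂ ⧸ LqIdeal z r),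
      α (j, h) = (α (1, 0)) ^ j * α (0, h))
    (hhom : ∀ (j₁ j₂ : ℤ) (h₁ h₂ : LaurentPolynomial ℂ ⧸ LqIdeal z r),
      α (j₁ + j₂, Ideal.Quotient.mk (LqIdeal z r) (T j₂) * h₁ + h₂)
        = α (j₁, h₁) * α (j₂, h₂)) :
    Function.Injective α := by
  have hx0 : x ≠ 0 := by
    intro hx'
    rw [hx'] at hx
    simp at hx
  have hA : ∀ l, (α (1, 0) : Matrix (Fin (r+1)) (Fin (r+1)) ℂ) 0 l
      = if l = 0 then x else 0 := by
    intro l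
    rw [h1, Matrix.smul_apply, jordMat, Matrix.of_apply]
    rcases eq_or_ne l 0 with h | h
    · subst h; simp
    · rw [if_neg fun h' => h h'.symm, if_neg (by simp), if_neg h]
      simp
  have hrentry : ∀ (a : Fin r → ℂ) (i : Fin r), rowMat r a 0 i.succ = a i := by
    intro a i
    rw [rowMat, Matrix.of_apply, if_neg (Fin.succ_ne_zero i).symm,
      dif_pos ⟨rfl, by simp [Fin.val_succ]⟩]
    congr
  have hr00 : ∀ a : Fin r → ℂ, rowMat r a 0 0 = 1 := by
    intro a
    rw [rowMat, Matrix.of_apply, if_pos rfl]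
  intro p q hpq
  obtain ⟨j₁, h₁⟩ := p
  obtain ⟨j₂, h₂⟩ := q
  set mk := Ideal.Quotient.mk (LqIdeal z r) with hmk
  have hTunit : ∀ n : ℤ, mk (T n) * mk (T (-n)) = 1 := by
    intro n
    rw [← _root_.map_mul, ← T_add, add_neg_cancel, T_zero, _root_.map_one]
  set d := j₁ - j₂ with hd_def
  set k := mk (T (-j₂)) * (h₁ - h₂) with hk_def
  have hstep := hhom d j₂ k h₂
  rw [show d + j₂ = j₁ by omega] at hstep
  rw [show mk (T j₂) * k + h₂ = h₁ by
    rw [hk_def, ← mul_assoc, hTunit j₂, one_mul, sub_add_cancel]] at hstep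
  have hdk : α (d, k) = 1 := by
    have : α (d, k) * α (j₂, h₂) = 1 * α (j₂, h₂) := by
      rw [one_mul, ← hstep, hpq]
    exact mul_right_cancel this
  obtain ⟨a, ha⟩ := surj_aux z r hr hz k
  have hgl : α (1, 0) ^ d * α (0, k) = 1 := (hgen d k).symm.trans hdk
  have hvm := congrArg Units.val hgl
  rw [Units.val_mul, Units.val_one, ← ha] at hvm
  rw [show (Units.val (α (0, mk (∑ i : Fin r, LaurentPolynomial.C (a i)
      * ((T 1 : LaurentPolynomial ℂ) - LaurentPolynomial.C z) ^ (i : ℕ)))))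
      = rowMat r a from h0 a] at hvm
  have hent : ∀ kk, (1 : Matrix (Fin (r+1)) (Fin (r+1)) ℂ) 0 kk
      = x ^ d * rowMat r a 0 kk := by
    intro kk
    rw [← hvm]
    exact mul_row0 _ _ (x ^ d) (row0_zpow (α (1, 0)) x hx0 hA d) kk
  have hxd1 : x ^ d = 1 := by
    have h' := hent 0
    rw [Matrix.one_apply_eq, hr00 a, mul_one] at h'
    exact h'.symm
  have hd0 : d = 0 := by
    by_contra hd
    refine hxord d.natAbs (Int.natAbs_ne_zero.2 hd) ?_
    rcases Int.natAbs_eq d with h | h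
    · rw [← zpow_natCast, ← h, hxd1]
    · rw [← zpow_natCast, show ((d.natAbs : ℤ)) = -d by omega, _root_.zpow_neg, hxd1, inv_one]
  have ha0 : a = 0 := by
    funext i
    have h' := hent i.succ
    rw [Matrix.one_apply_ne (Fin.succ_ne_zero i).symm, hrentry a i, hxd1, one_mul] at h'
    exact h'.symm
  have hk0 : k = 0 := by
    rw [← ha, ha0]
    simp
  have hh : h₁ = h₂ := by
    have h' : h₁ - h₂ = mk (T j₂) * (mk (T (-j₂)) * (h₁ - h₂)) := by
      rw [← mul_assoc, hTunit j₂, one_mul]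
    rw [← hk_def, hk0, mul_zero] at h'
    exact sub_eq_zero.mp h'
  have hj : j₁ = j₂ := by omega
  rw [hj, hh]
end
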